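/- Assume r ≥ 0 and max(q₁, q₋₁) > 0. Let ε > 0 and let k̄ = l̄ be a nonnegative integer with k̄ ≥ max{ m·⌈2W_m − 1⌉ − 1 , m·⌈W_m·e − ln ε + ln(4m(m+1)KG)⌉ − 1 }. Then the truncated backward American put price with boundary value K satisfies |V_A^K(0,0,0) − V_A(0,0,0)| < ε, where V_A is the full Hilliard–Schwartz backward American put price. -/

import Mathlib

open Finset

open scoped Classical

noncomputable section

namespace HScut

/-- Level of a jump path `s : Fin n → ℤ` at time `t` (sum of the first `t` jumps). -/
def levelAt (n : ℕ) (s : Fin n → ℤ) (t : ℕ) : ℤ :=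
  ∑ i ∈ Finset.univ.filter (fun i : Fin n => (i : ℕ) < t), s i

/-- Jump paths of length `n` with jumps of amplitude at most `m`. -/
def paths (n m : ℕ) : Finset (Fin n → ℤ) :=
  Fintype.piFinset fun _ => Finset.Icc (-(m : ℤ)) (m : ℤ)

/-- Weight `π(s) = ∏ q (s i)` of a jump path. -/
def pathWeight (n : ℕ) (q : ℤ → ℝ) (s : Fin n → ℤ) : ℝ :=
  ∏ i, q (s i)

/-- Modified weight `π̃(s)`, where each `q (±i)` (`i ≠ 0`) is replaced by `max (q i) (q (-i))`
(which equals `w_i / n`). -/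
def modWeight (n : ℕ) (q : ℤ → ℝ) (s : Fin n → ℤ) : ℝ :=
  ∏ i, (if s i = 0 then q 0 else max (q (s i)) (q (-s i)))

/-- `q^{(n)}(k)`: probability of a net balance of `k` cumulative jumps at maturity. -/
def qfull (n m : ℕ) (q : ℤ → ℝ) (k : ℤ) : ℝ :=
  ∑ s ∈ (paths n m).filter (fun s => levelAt n s n = k), pathWeight n q s

/-- `q̃^{(n)}(k)`: enlarged probability of a net balance of `k` cumulative jumps at maturity. -/
def qtilde (n m : ℕ) (q : ℤ → ℝ) (k : ℤ) : ℝ :=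
  ∑ s ∈ (paths n m).filter (fun s => levelAt n s n = k), modWeight n q s

/-- `q^{k̄,(n)}(k)`: probability of a net balance of `k` jumps at maturity while reaching at
some time a net balance higher than `k̄`. -/
def qup (n m : ℕ) (q : ℤ → ℝ) (kbar : ℕ) (k : ℤ) : ℝ :=
  ∑ s ∈ (paths n m).filter
      (fun s => levelAt n s n = k ∧ ∃ t ≤ n, (kbar : ℤ) + 1 ≤ levelAt n s t),
    pathWeight n q s

/-- `q_{l̄}^{(n)}(k)`: probability of a net balance of `k` jumps at maturity while reaching at
some time a net balance lower than `-l̄`. -/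
def qdown (n m : ℕ) (q : ℤ → ℝ) (lbar : ℕ) (k : ℤ) : ℝ :=
  ∑ s ∈ (paths n m).filter
      (fun s => levelAt n s n = k ∧ ∃ t ≤ n, levelAt n s t ≤ -(lbar : ℤ) - 1),
    pathWeight n q s

/-- `q^{cut,(n)}(k)`: probability of reaching level `k` at maturity without ever leaving the
band `[-l̄, k̄]`. -/
def qcut (n m : ℕ) (q : ℤ → ℝ) (kbar lbar : ℕ) (k : ℤ) : ℝ :=
  ∑ s ∈ (paths n m).filter
      (fun s => levelAt n s n = k ∧
        ∀ t ≤ n, -(lbar : ℤ) ≤ levelAt n s t ∧ levelAt n s t ≤ (kbar : ℤ)),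
    pathWeight n q s

/-- `P(j) = C(n,j) p^j (1-p)^(n-j)`. -/
def binomP (n : ℕ) (p : ℝ) (j : ℕ) : ℝ :=
  (n.choose j : ℝ) * p ^ j * (1 - p) ^ (n - j)

/-- Put payoff at the terminal node `(n, j, k)`. -/
def putPayoff (n : ℕ) (S0 K σ dt h : ℝ) (j : ℕ) (k : ℤ) : ℝ :=
  max (K - S0 * Real.exp ((2 * (j : ℝ) - (n : ℝ)) * (σ * Real.sqrt dt) + h * (k : ℝ))) 0

/-- European put value `V` on the full tree. -/
def Vput (n m : ℕ) (q : ℤ → ℝ) (p S0 K σ τ h r : ℝ) : ℝ :=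
  Real.exp (-(r * τ)) *
    ∑ k ∈ Finset.Icc (-((m : ℤ) * n)) ((m : ℤ) * n), ∑ j ∈ Finset.range (n + 1),
      putPayoff n S0 K σ (τ / n) h j k * binomP n p j * qfull n m q k

/-- European put value `V^{TT}` on the truncated tree. -/
def VTT (n m : ℕ) (q : ℤ → ℝ) (p S0 K σ τ h r : ℝ) (kbar lbar : ℕ) : ℝ :=
  Real.exp (-(r * τ)) *
    ∑ k ∈ Finset.Icc (-(lbar : ℤ)) (kbar : ℤ), ∑ j ∈ Finset.range (n + 1),
      putPayoff n S0 K σ (τ / n) h j k * binomP n p j * qcut n m q kbar lbar k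

/-- The sequence `W_i`: `W₁ = w₁`, `W_{i+1} = w_{i+1} + W_i^{(i+1)/i}` (real powers). -/
def Wseq (w : ℕ → ℝ) : ℕ → ℝ
  | 0 => 0
  | 1 => w 1
  | (i + 2) => w (i + 2) + Wseq w (i + 1) ^ (((i : ℝ) + 2) / ((i : ℝ) + 1))

/-- `M_i = max { W_i, W_i^{(1-i)/i} }` (real powers). -/
def Mseq (w : ℕ → ℝ) (i : ℕ) : ℝ :=
  max (Wseq w i) (Wseq w i ^ ((1 - (i : ℝ)) / (i : ℝ)))

/-- `G = 2 m max{W_m, 1} e^{W_m} ∏_{i=1}^{m-1} M_i²`. -/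
def Gconst (w : ℕ → ℝ) (m : ℕ) : ℝ :=
  2 * m * max (Wseq w m) 1 * Real.exp (Wseq w m) * ∏ i ∈ Finset.Icc 1 (m - 1), (Mseq w i) ^ 2

/-- Value of the underlying at a node with (real) time index `i`, `j` up Brownian moves and
net jump level `l`. -/
def Sval (S0 σ dt h : ℝ) (i : ℝ) (j : ℕ) (l : ℤ) : ℝ :=
  S0 * Real.exp ((2 * (j : ℝ) - i) * (σ * Real.sqrt dt) + (l : ℝ) * h)

/-- Full backward European put price; `VEfull … d j l` is the value `V_E(n-d, j, l)`
(`d` = number of remaining steps). -/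
def VEfull (n m : ℕ) (q : ℤ → ℝ) (p dt S0 K σ h r : ℝ) : ℕ → ℕ → ℤ → ℝ
  | 0, j, l => max (K - Sval S0 σ dt h (n : ℝ) j l) 0
  | (d + 1), j, l =>
      Real.exp (-(r * dt)) *
        ∑ k ∈ Finset.Icc (-(m : ℤ)) (m : ℤ),
          (VEfull n m q p dt S0 K σ h r d (j + 1) (l + k) * p +
            VEfull n m q p dt S0 K σ h r d j (l + k) * (1 - p)) * q k

/-- Full backward American put price; `VAfull … d j l` is the value `V_A(n-d, j, l)`. -/
def VAfull (n m : ℕ) (q : ℤ → ℝ) (p dt S0 K σ h r : ℝ) : ℕ → ℕ → ℤ → ℝ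
  | 0, j, l => max (K - Sval S0 σ dt h (n : ℝ) j l) 0
  | (d + 1), j, l =>
      max
        (Real.exp (-(r * dt)) *
          ∑ k ∈ Finset.Icc (-(m : ℤ)) (m : ℤ),
            (VAfull n m q p dt S0 K σ h r d (j + 1) (l + k) * p +
              VAfull n m q p dt S0 K σ h r d j (l + k) * (1 - p)) * q k)
        (K - Sval S0 σ dt h ((n : ℝ) - (d + 1)) j l)

/-- Truncated backward European put price with boundary value `b`;
`VEtr … d j l` is the value `V_E^b(n-d, j, l)`. -/
def VEtr (n m : ℕ) (q : ℤ → ℝ) (p dt S0 K σ h r b : ℝ) (kbar lbar : ℕ) :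
    ℕ → ℕ → ℤ → ℝ
  | 0, j, l =>
      if -(lbar : ℤ) ≤ l ∧ l ≤ (kbar : ℤ) then max (K - Sval S0 σ dt h (n : ℝ) j l) 0 else b
  | (d + 1), j, l =>
      if -(lbar : ℤ) ≤ l ∧ l ≤ (kbar : ℤ) then
        Real.exp (-(r * dt)) *
          ∑ k ∈ Finset.Icc (-(m : ℤ)) (m : ℤ),
            (VEtr n m q p dt S0 K σ h r b kbar lbar d (j + 1) (l + k) * p +
              VEtr n m q p dt S0 K σ h r b kbar lbar d j (l + k) * (1 - p)) * q k
      else b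

/-- Truncated backward American put price with boundary value `b`;
`VAtr … d j l` is the value `V_A^b(n-d, j, l)`. -/
def VAtr (n m : ℕ) (q : ℤ → ℝ) (p dt S0 K σ h r b : ℝ) (kbar lbar : ℕ) :
    ℕ → ℕ → ℤ → ℝ
  | 0, j, l =>
      if -(lbar : ℤ) ≤ l ∧ l ≤ (kbar : ℤ) then max (K - Sval S0 σ dt h (n : ℝ) j l) 0 else b
  | (d + 1), j, l =>
      if -(lbar : ℤ) ≤ l ∧ l ≤ (kbar : ℤ) then
        max
          (Real.exp (-(r * dt)) *
            ∑ k ∈ Finset.Icc (-(m : ℤ)) (m : ℤ),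
              (VAtr n m q p dt S0 K σ h r b kbar lbar d (j + 1) (l + k) * p +
                VAtr n m q p dt S0 K σ h r b kbar lbar d j (l + k) * (1 - p)) * q k)
          (K - Sval S0 σ dt h ((n : ℝ) - (d + 1)) j l)
      else b

/-- The sum, over all jump-path prefixes that first exit the band `[-l̄, k̄]` at some time
`1 ≤ i ≤ n`, of the prefix probability times `b e^{-r i Δt}`. -/
def exitSum (n m : ℕ) (q : ℤ → ℝ) (r dt : ℝ) (kbar lbar : ℕ) (b : ℝ) : ℝ :=
  ∑ i ∈ Finset.Icc 1 n,
    ∑ y ∈ (paths i m).filter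
        (fun y =>
          (∀ t < i, -(lbar : ℤ) ≤ levelAt i y t ∧ levelAt i y t ≤ (kbar : ℤ)) ∧
          ¬(-(lbar : ℤ) ≤ levelAt i y i ∧ levelAt i y i ≤ (kbar : ℤ))),
      pathWeight i q y * (b * Real.exp (-(r * (i : ℝ) * dt)))

end HScut

open HScut

section Aux
open Finset

variable {n m : ℕ} {q : ℤ → ℝ} {p dt S0 K σ h r : ℝ}

/-- Band-exit recursion: `Eex m q kbar d l` bounds the probability of leaving
the band `[-kbar, kbar]` within `d` steps starting from level `l`. -/
def Eex (m : ℕ) (q : ℤ → ℝ) (kbar : ℕ) : ℕ → ℤ → ℝ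
  | 0, l => if -(kbar : ℤ) ≤ l ∧ l ≤ (kbar : ℤ) then 0 else 1
  | (d+1), l => if -(kbar : ℤ) ≤ l ∧ l ≤ (kbar : ℤ) then
      ∑ k ∈ Finset.Icc (-(m : ℤ)) (m : ℤ), Eex m q kbar d (l + k) * q k
    else 1

lemma Sval_pos (hS0 : 0 < S0) (i : ℝ) (j : ℕ) (l : ℤ) : 0 < Sval S0 σ dt h i j l :=
  mul_pos hS0 (Real.exp_pos _)

lemma Eex_nonneg (hq : ∀ l : ℤ, -(m : ℤ) ≤ l → l ≤ (m : ℤ) → 0 ≤ q l)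
    (kbar : ℕ) : ∀ d l, 0 ≤ Eex m q kbar d l := by
  intro d
  induction d with
  | zero => intro l; rw [Eex]; split <;> norm_num
  | succ d ih =>
    intro l; rw [Eex]; split
    · refine Finset.sum_nonneg fun k hk => ?_
      rw [mem_Icc] at hk
      exact mul_nonneg (ih _) (hq k hk.1 hk.2)
    · norm_num

lemma VAfull_bounds (hq : ∀ l : ℤ, -(m : ℤ) ≤ l → l ≤ (m : ℤ) → 0 ≤ q l)
    (hsum : ∑ l ∈ Finset.Icc (-(m : ℤ)) (m : ℤ), q l = 1)
    (hS0 : 0 < S0) (hK : 0 < K) (hp0 : 0 ≤ p) (hp1 : p ≤ 1) (hrdt : 0 ≤ r * dt) :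
    ∀ d j l, 0 ≤ VAfull n m q p dt S0 K σ h r d j l ∧
      VAfull n m q p dt S0 K σ h r d j l ≤ K := by
  intro d
  induction d with
  | zero =>
    intro j l
    rw [VAfull]
    constructor
    · exact le_max_right _ _
    · exact max_le (by linarith [Sval_pos (σ := σ) (dt := dt) (h := h) hS0 (n:ℝ) j l]) hK.le
  | succ d ih =>
    intro j l
    rw [VAfull]
    have hexp : Real.exp (-(r * dt)) ≤ 1 := Real.exp_le_one_iff.2 (by linarith)
    have hsum_le : ∑ k ∈ Finset.Icc (-(m : ℤ)) (m : ℤ),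
        (VAfull n m q p dt S0 K σ h r d (j+1) (l+k) * p +
          VAfull n m q p dt S0 K σ h r d j (l+k) * (1-p)) * q k ≤ K := by
      calc ∑ k ∈ Finset.Icc (-(m : ℤ)) (m : ℤ),
          (VAfull n m q p dt S0 K σ h r d (j+1) (l+k) * p +
            VAfull n m q p dt S0 K σ h r d j (l+k) * (1-p)) * q k
          ≤ ∑ k ∈ Finset.Icc (-(m : ℤ)) (m : ℤ), K * q k := by
            refine Finset.sum_le_sum fun k hk => ?_
            rw [mem_Icc] at hk
            have hqk := hq k hk.1 hk.2
            have h1 := (ih (j+1) (l+k)).2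
            have h2 := (ih j (l+k)).2
            have h1' := (ih (j+1) (l+k)).1
            have h2' := (ih j (l+k)).1
            have : VAfull n m q p dt S0 K σ h r d (j+1) (l+k) * p +
                VAfull n m q p dt S0 K σ h r d j (l+k) * (1-p) ≤ K := by nlinarith
            exact mul_le_mul_of_nonneg_right this hqk
        _ = K := by rw [← Finset.mul_sum, hsum, mul_one]
    have hsum_nn : 0 ≤ ∑ k ∈ Finset.Icc (-(m : ℤ)) (m : ℤ),
        (VAfull n m q p dt S0 K σ h r d (j+1) (l+k) * p +
          VAfull n m q p dt S0 K σ h r d j (l+k) * (1-p)) * q k := by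
      refine Finset.sum_nonneg fun k hk => ?_
      rw [mem_Icc] at hk
      have hqk := hq k hk.1 hk.2
      have h1' := (ih (j+1) (l+k)).1
      have h2' := (ih j (l+k)).1
      have : 0 ≤ VAfull n m q p dt S0 K σ h r d (j+1) (l+k) * p +
          VAfull n m q p dt S0 K σ h r d j (l+k) * (1-p) := by nlinarith
      exact mul_nonneg this hqk
    constructor
    · exact le_max_of_le_left (mul_nonneg (Real.exp_pos _).le hsum_nn)
    · refine max_le ?_ (by linarith [Sval_pos (σ := σ) (dt := dt) (h := h) hS0 ((n:ℝ) - (d+1)) j l])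
      calc Real.exp (-(r * dt)) * ∑ k ∈ Finset.Icc (-(m : ℤ)) (m : ℤ),
          (VAfull n m q p dt S0 K σ h r d (j+1) (l+k) * p +
            VAfull n m q p dt S0 K σ h r d j (l+k) * (1-p)) * q k
          ≤ 1 * K := mul_le_mul hexp hsum_le hsum_nn zero_le_one
        _ = K := one_mul K

lemma VAtr_bounds (hq : ∀ l : ℤ, -(m : ℤ) ≤ l → l ≤ (m : ℤ) → 0 ≤ q l)
    (hsum : ∑ l ∈ Finset.Icc (-(m : ℤ)) (m : ℤ), q l = 1)
    (hS0 : 0 < S0) (hK : 0 < K) (hp0 : 0 ≤ p) (hp1 : p ≤ 1) (hrdt : 0 ≤ r * dt)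
    (kbar : ℕ) :
    ∀ d j l, 0 ≤ VAtr n m q p dt S0 K σ h r K kbar kbar d j l ∧
      VAtr n m q p dt S0 K σ h r K kbar kbar d j l ≤ K := by
  intro d
  induction d with
  | zero =>
    intro j l
    rw [VAtr]
    split
    · exact ⟨le_max_right _ _,
        max_le (by linarith [Sval_pos (σ := σ) (dt := dt) (h := h) hS0 (n:ℝ) j l]) hK.le⟩
    · exact ⟨hK.le, le_rfl⟩
  | succ d ih =>
    intro j l
    rw [VAtr]
    split
    · have hexp : Real.exp (-(r * dt)) ≤ 1 := Real.exp_le_one_iff.2 (by linarith)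
      have hsum_le : ∑ k ∈ Finset.Icc (-(m : ℤ)) (m : ℤ),
          (VAtr n m q p dt S0 K σ h r K kbar kbar d (j+1) (l+k) * p +
            VAtr n m q p dt S0 K σ h r K kbar kbar d j (l+k) * (1-p)) * q k ≤ K := by
        calc ∑ k ∈ Finset.Icc (-(m : ℤ)) (m : ℤ),
            (VAtr n m q p dt S0 K σ h r K kbar kbar d (j+1) (l+k) * p +
              VAtr n m q p dt S0 K σ h r K kbar kbar d j (l+k) * (1-p)) * q k
            ≤ ∑ k ∈ Finset.Icc (-(m : ℤ)) (m : ℤ), K * q k := by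
              refine Finset.sum_le_sum fun k hk => ?_
              rw [mem_Icc] at hk
              have hqk := hq k hk.1 hk.2
              have h1 := (ih (j+1) (l+k)).2
              have h2 := (ih j (l+k)).2
              have h1' := (ih (j+1) (l+k)).1
              have h2' := (ih j (l+k)).1
              have : VAtr n m q p dt S0 K σ h r K kbar kbar d (j+1) (l+k) * p +
                  VAtr n m q p dt S0 K σ h r K kbar kbar d j (l+k) * (1-p) ≤ K := by nlinarith
              exact mul_le_mul_of_nonneg_right this hqk
          _ = K := by rw [← Finset.mul_sum, hsum, mul_one]
      have hsum_nn : 0 ≤ ∑ k ∈ Finset.Icc (-(m : ℤ)) (m : ℤ),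
          (VAtr n m q p dt S0 K σ h r K kbar kbar d (j+1) (l+k) * p +
            VAtr n m q p dt S0 K σ h r K kbar kbar d j (l+k) * (1-p)) * q k := by
        refine Finset.sum_nonneg fun k hk => ?_
        rw [mem_Icc] at hk
        have hqk := hq k hk.1 hk.2
        have h1' := (ih (j+1) (l+k)).1
        have h2' := (ih j (l+k)).1
        have : 0 ≤ VAtr n m q p dt S0 K σ h r K kbar kbar d (j+1) (l+k) * p +
            VAtr n m q p dt S0 K σ h r K kbar kbar d j (l+k) * (1-p) := by nlinarith
        exact mul_nonneg this hqk
      constructor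
      · exact le_max_of_le_left (mul_nonneg (Real.exp_pos _).le hsum_nn)
      · refine max_le ?_ (by linarith [Sval_pos (σ := σ) (dt := dt) (h := h) hS0 ((n:ℝ) - (d+1)) j l])
        calc Real.exp (-(r * dt)) * ∑ k ∈ Finset.Icc (-(m : ℤ)) (m : ℤ),
            (VAtr n m q p dt S0 K σ h r K kbar kbar d (j+1) (l+k) * p +
              VAtr n m q p dt S0 K σ h r K kbar kbar d j (l+k) * (1-p)) * q k
            ≤ 1 * K := mul_le_mul hexp hsum_le hsum_nn zero_le_one
          _ = K := one_mul K
    · exact ⟨hK.le, le_rfl⟩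

lemma sandwich (hq : ∀ l : ℤ, -(m : ℤ) ≤ l → l ≤ (m : ℤ) → 0 ≤ q l)
    (hsum : ∑ l ∈ Finset.Icc (-(m : ℤ)) (m : ℤ), q l = 1)
    (hS0 : 0 < S0) (hK : 0 < K) (hp0 : 0 ≤ p) (hp1 : p ≤ 1) (hrdt : 0 ≤ r * dt)
    (kbar : ℕ) :
    ∀ d j l, VAfull n m q p dt S0 K σ h r d j l ≤ VAtr n m q p dt S0 K σ h r K kbar kbar d j l ∧
      VAtr n m q p dt S0 K σ h r K kbar kbar d j l - VAfull n m q p dt S0 K σ h r d j l ≤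
        K * Eex m q kbar d l := by
  intro d
  induction d with
  | zero =>
    intro j l
    rw [VAtr, VAfull, Eex]
    split
    · simp
    · have := (VAfull_bounds (n := n) (σ := σ) (h := h) hq hsum hS0 hK hp0 hp1 hrdt 0 j l)
      rw [VAfull] at this
      constructor
      · exact this.2
      · rw [mul_one]; linarith [this.1]
  | succ d ih =>
    intro j l
    rw [VAtr, VAfull, Eex]
    split
    · -- in band
      set cF := Real.exp (-(r * dt)) * ∑ k ∈ Finset.Icc (-(m : ℤ)) (m : ℤ),
          (VAfull n m q p dt S0 K σ h r d (j+1) (l+k) * p +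
            VAfull n m q p dt S0 K σ h r d j (l+k) * (1-p)) * q k with hcF
      set cT := Real.exp (-(r * dt)) * ∑ k ∈ Finset.Icc (-(m : ℤ)) (m : ℤ),
          (VAtr n m q p dt S0 K σ h r K kbar kbar d (j+1) (l+k) * p +
            VAtr n m q p dt S0 K σ h r K kbar kbar d j (l+k) * (1-p)) * q k with hcT
      have hdiff : cT - cF ≤ K * ∑ k ∈ Finset.Icc (-(m : ℤ)) (m : ℤ), Eex m q kbar d (l+k) * q k := by
        rw [hcT, hcF, ← mul_sub, ← Finset.sum_sub_distrib]
        have hstep : ∑ k ∈ Finset.Icc (-(m : ℤ)) (m : ℤ),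
            ((VAtr n m q p dt S0 K σ h r K kbar kbar d (j+1) (l+k) * p +
              VAtr n m q p dt S0 K σ h r K kbar kbar d j (l+k) * (1-p)) * q k -
             (VAfull n m q p dt S0 K σ h r d (j+1) (l+k) * p +
              VAfull n m q p dt S0 K σ h r d j (l+k) * (1-p)) * q k)
            ≤ ∑ k ∈ Finset.Icc (-(m : ℤ)) (m : ℤ), K * (Eex m q kbar d (l+k) * q k) := by
          refine Finset.sum_le_sum fun k hk => ?_
          rw [mem_Icc] at hk
          have hqk := hq k hk.1 hk.2
          have h1 := mul_le_mul_of_nonneg_right (ih (j+1) (l+k)).2 hp0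
          have h2 := mul_le_mul_of_nonneg_right (ih j (l+k)).2 (by linarith : (0:ℝ) ≤ 1 - p)
          have key : (VAtr n m q p dt S0 K σ h r K kbar kbar d (j+1) (l+k) * p +
              VAtr n m q p dt S0 K σ h r K kbar kbar d j (l+k) * (1-p)) -
              (VAfull n m q p dt S0 K σ h r d (j+1) (l+k) * p +
              VAfull n m q p dt S0 K σ h r d j (l+k) * (1-p)) ≤ K * Eex m q kbar d (l+k) := by
            nlinarith
          calc (VAtr n m q p dt S0 K σ h r K kbar kbar d (j+1) (l+k) * p +
              VAtr n m q p dt S0 K σ h r K kbar kbar d j (l+k) * (1-p)) * q k -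
              (VAfull n m q p dt S0 K σ h r d (j+1) (l+k) * p +
              VAfull n m q p dt S0 K σ h r d j (l+k) * (1-p)) * q k
              = ((VAtr n m q p dt S0 K σ h r K kbar kbar d (j+1) (l+k) * p +
              VAtr n m q p dt S0 K σ h r K kbar kbar d j (l+k) * (1-p)) -
              (VAfull n m q p dt S0 K σ h r d (j+1) (l+k) * p +
              VAfull n m q p dt S0 K σ h r d j (l+k) * (1-p))) * q k := by ring
            _ ≤ (K * Eex m q kbar d (l+k)) * q k := mul_le_mul_of_nonneg_right key hqk
            _ = K * (Eex m q kbar d (l+k) * q k) := by ring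
        have hnn : 0 ≤ ∑ k ∈ Finset.Icc (-(m : ℤ)) (m : ℤ),
            ((VAtr n m q p dt S0 K σ h r K kbar kbar d (j+1) (l+k) * p +
              VAtr n m q p dt S0 K σ h r K kbar kbar d j (l+k) * (1-p)) * q k -
             (VAfull n m q p dt S0 K σ h r d (j+1) (l+k) * p +
              VAfull n m q p dt S0 K σ h r d j (l+k) * (1-p)) * q k) := by
          refine Finset.sum_nonneg fun k hk => ?_
          rw [mem_Icc] at hk
          have hqk := hq k hk.1 hk.2
          have h1 := mul_le_mul_of_nonneg_right (ih (j+1) (l+k)).1 hp0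
          have h2 := mul_le_mul_of_nonneg_right (ih j (l+k)).1 (by linarith : (0:ℝ) ≤ 1 - p)
          have key : (VAfull n m q p dt S0 K σ h r d (j+1) (l+k) * p +
              VAfull n m q p dt S0 K σ h r d j (l+k) * (1-p)) ≤
              (VAtr n m q p dt S0 K σ h r K kbar kbar d (j+1) (l+k) * p +
              VAtr n m q p dt S0 K σ h r K kbar kbar d j (l+k) * (1-p)) := by nlinarith
          nlinarith [mul_le_mul_of_nonneg_right key hqk]
        have hexp : Real.exp (-(r * dt)) ≤ 1 := Real.exp_le_one_iff.2 (by linarith)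
        calc Real.exp (-(r * dt)) * ∑ k ∈ Finset.Icc (-(m : ℤ)) (m : ℤ),
            ((VAtr n m q p dt S0 K σ h r K kbar kbar d (j+1) (l+k) * p +
              VAtr n m q p dt S0 K σ h r K kbar kbar d j (l+k) * (1-p)) * q k -
             (VAfull n m q p dt S0 K σ h r d (j+1) (l+k) * p +
              VAfull n m q p dt S0 K σ h r d j (l+k) * (1-p)) * q k)
            ≤ 1 * ∑ k ∈ Finset.Icc (-(m : ℤ)) (m : ℤ),
            ((VAtr n m q p dt S0 K σ h r K kbar kbar d (j+1) (l+k) * p +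
              VAtr n m q p dt S0 K σ h r K kbar kbar d j (l+k) * (1-p)) * q k -
             (VAfull n m q p dt S0 K σ h r d (j+1) (l+k) * p +
              VAfull n m q p dt S0 K σ h r d j (l+k) * (1-p)) * q k) :=
              mul_le_mul_of_nonneg_right hexp hnn
          _ ≤ K * ∑ k ∈ Finset.Icc (-(m : ℤ)) (m : ℤ), Eex m q kbar d (l+k) * q k := by
              rw [one_mul, Finset.mul_sum]; exact hstep
      have hle : cF ≤ cT := by
        rw [hcT, hcF]
        refine mul_le_mul_of_nonneg_left (Finset.sum_le_sum fun k hk => ?_) (Real.exp_pos _).le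
        rw [mem_Icc] at hk
        have hqk := hq k hk.1 hk.2
        have h1 := mul_le_mul_of_nonneg_right (ih (j+1) (l+k)).1 hp0
        have h2 := mul_le_mul_of_nonneg_right (ih j (l+k)).1 (by linarith : (0:ℝ) ≤ 1 - p)
        have key : (VAfull n m q p dt S0 K σ h r d (j+1) (l+k) * p +
            VAfull n m q p dt S0 K σ h r d j (l+k) * (1-p)) ≤
            (VAtr n m q p dt S0 K σ h r K kbar kbar d (j+1) (l+k) * p +
            VAtr n m q p dt S0 K σ h r K kbar kbar d j (l+k) * (1-p)) := by nlinarith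
        exact mul_le_mul_of_nonneg_right key hqk
      constructor
      · exact max_le_max hle le_rfl
      · have h1 : max cT (K - Sval S0 σ dt h ((n:ℝ) - (d+1)) j l) ≤
            max cF (K - Sval S0 σ dt h ((n:ℝ) - (d+1)) j l) + (cT - cF) := by
          apply max_le
          · linarith [le_max_left cF (K - Sval S0 σ dt h ((n:ℝ) - (d+1)) j l), hle]
          · linarith [le_max_right cF (K - Sval S0 σ dt h ((n:ℝ) - (d+1)) j l), hle]
        linarith
    · -- out of band
      have hb := (VAfull_bounds (n := n) (σ := σ) (h := h) hq hsum hS0 hK hp0 hp1 hrdt (d+1) j l)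
      rw [VAfull] at hb
      exact ⟨hb.2, by rw [mul_one]; linarith [hb.1]⟩

end Aux

section Aux2
open Finset

variable {m : ℕ} {ρ : ℤ → ℝ}

/-- One-sided exit recursion: probability that the running sum of positive parts of the
jumps reaches at least `u` within `d` steps. -/
def Ufun (m : ℕ) (ρ : ℤ → ℝ) : ℕ → ℤ → ℝ
  | 0, u => if u ≤ 0 then 1 else 0
  | (d+1), u => if u ≤ 0 then 1 else
      ∑ k ∈ Finset.Icc (-(m : ℤ)) (m : ℤ), Ufun m ρ d (u - max k 0) * ρ k

lemma Ufun_of_nonpos (d : ℕ) {u : ℤ} (hu : u ≤ 0) : Ufun m ρ d u = 1 := by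
  cases d <;> rw [Ufun] <;> simp [hu]

lemma Ufun_nonneg (hρ : ∀ k ∈ Finset.Icc (-(m : ℤ)) (m : ℤ), 0 ≤ ρ k) :
    ∀ d u, 0 ≤ Ufun m ρ d u := by
  intro d
  induction d with
  | zero => intro u; rw [Ufun]; split <;> norm_num
  | succ d ih =>
    intro u; rw [Ufun]; split
    · norm_num
    · exact Finset.sum_nonneg fun k hk => mul_nonneg (ih _) (hρ k hk)

lemma Ufun_le_one (hρ : ∀ k ∈ Finset.Icc (-(m : ℤ)) (m : ℤ), 0 ≤ ρ k)
    (hρ1 : ∑ k ∈ Finset.Icc (-(m : ℤ)) (m : ℤ), ρ k = 1) :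
    ∀ d u, Ufun m ρ d u ≤ 1 := by
  intro d
  induction d with
  | zero => intro u; rw [Ufun]; split <;> norm_num
  | succ d ih =>
    intro u; rw [Ufun]; split
    · norm_num
    · calc ∑ k ∈ Finset.Icc (-(m : ℤ)) (m : ℤ), Ufun m ρ d (u - max k 0) * ρ k
          ≤ ∑ k ∈ Finset.Icc (-(m : ℤ)) (m : ℤ), 1 * ρ k :=
            Finset.sum_le_sum fun k hk => mul_le_mul_of_nonneg_right (ih _) (hρ k hk)
        _ = 1 := by simpa using hρ1

lemma Ufun_anti (hρ : ∀ k ∈ Finset.Icc (-(m : ℤ)) (m : ℤ), 0 ≤ ρ k)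
    (hρ1 : ∑ k ∈ Finset.Icc (-(m : ℤ)) (m : ℤ), ρ k = 1) :
    ∀ d (u v : ℤ), u ≤ v → Ufun m ρ d v ≤ Ufun m ρ d u := by
  intro d
  induction d with
  | zero =>
    intro u v huv; rw [Ufun, Ufun]
    split
    · rename_i hv
      rw [if_pos (le_trans huv hv)]
    · split <;> norm_num
  | succ d ih =>
    intro u v huv
    by_cases hu : u ≤ 0
    · rw [Ufun_of_nonpos _ hu]
      exact Ufun_le_one hρ hρ1 _ _
    · have hv : ¬ v ≤ 0 := fun hv => hu (le_trans huv hv)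
      rw [Ufun, Ufun, if_neg hu, if_neg hv]
      refine Finset.sum_le_sum fun k hk => mul_le_mul_of_nonneg_right
        (ih _ _ (by omega)) (hρ k hk)

lemma Eex_le_Ufun {q : ℤ → ℝ} (hq : ∀ k ∈ Finset.Icc (-(m : ℤ)) (m : ℤ), 0 ≤ q k)
    (hsum : ∑ k ∈ Finset.Icc (-(m : ℤ)) (m : ℤ), q k = 1) (kbar : ℕ) :
    ∀ d l, Eex m q kbar d l ≤
      Ufun m q d ((kbar : ℤ) + 1 - l) + Ufun m (fun k => q (-k)) d ((kbar : ℤ) + 1 + l) := by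
  have hq' : ∀ k ∈ Finset.Icc (-(m : ℤ)) (m : ℤ), 0 ≤ (fun k => q (-k)) k := by
    intro k hk; rw [mem_Icc] at hk; exact hq (-k) (by rw [mem_Icc]; omega)
  have hsum' : ∑ k ∈ Finset.Icc (-(m : ℤ)) (m : ℤ), q (-k) = 1 := by
    rw [← hsum]
    exact Finset.sum_nbij' (fun k => -k) (fun k => -k)
      (by intro a ha; rw [mem_Icc] at *; omega) (by intro a ha; rw [mem_Icc] at *; omega)
      (by intros; omega) (by intros; omega) (fun a _ => rfl)
  intro d
  induction d with
  | zero =>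
    intro l
    rw [Eex]
    split
    · rename_i hband
      have h1 := Ufun_nonneg (m := m) hq 0 ((kbar : ℤ) + 1 - l)
      have h2 := Ufun_nonneg (m := m) hq' 0 ((kbar : ℤ) + 1 + l)
      linarith
    · rename_i hband
      rcases (by omega : (kbar : ℤ) + 1 - l ≤ 0 ∨ (kbar : ℤ) + 1 + l ≤ 0) with hc | hc
      · rw [Ufun_of_nonpos _ hc]
        have := Ufun_nonneg (m := m) hq' 0 ((kbar : ℤ) + 1 + l); linarith
      · rw [Ufun_of_nonpos _ hc]
        have := Ufun_nonneg (m := m) hq 0 ((kbar : ℤ) + 1 - l); linarith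
  | succ d ih =>
    intro l
    rw [Eex]
    split
    · rename_i hband
      have step1 : ∑ k ∈ Finset.Icc (-(m : ℤ)) (m : ℤ), Eex m q kbar d (l + k) * q k ≤
          ∑ k ∈ Finset.Icc (-(m : ℤ)) (m : ℤ),
            (Ufun m q d ((kbar : ℤ) + 1 - (l+k)) + Ufun m (fun k => q (-k)) d ((kbar : ℤ) + 1 + (l+k))) * q k :=
        Finset.sum_le_sum fun k hk => mul_le_mul_of_nonneg_right (ih (l+k)) (hq k hk)
      have step2 : ∑ k ∈ Finset.Icc (-(m : ℤ)) (m : ℤ),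
            (Ufun m q d ((kbar : ℤ) + 1 - (l+k)) + Ufun m (fun k => q (-k)) d ((kbar : ℤ) + 1 + (l+k))) * q k
          = (∑ k ∈ Finset.Icc (-(m : ℤ)) (m : ℤ), Ufun m q d ((kbar : ℤ) + 1 - (l+k)) * q k)
            + ∑ k ∈ Finset.Icc (-(m : ℤ)) (m : ℤ), Ufun m (fun k => q (-k)) d ((kbar : ℤ) + 1 + (l+k)) * q k := by
        rw [← Finset.sum_add_distrib]
        exact Finset.sum_congr rfl fun k _ => by ring
      have hA : ∑ k ∈ Finset.Icc (-(m : ℤ)) (m : ℤ), Ufun m q d ((kbar : ℤ) + 1 - (l+k)) * q k ≤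
          Ufun m q (d+1) ((kbar : ℤ) + 1 - l) := by
        rw [Ufun, if_neg (by omega)]
        refine Finset.sum_le_sum fun k hk => mul_le_mul_of_nonneg_right
          (Ufun_anti hq hsum d _ _ (by omega)) (hq k hk)
      have hB : ∑ k ∈ Finset.Icc (-(m : ℤ)) (m : ℤ), Ufun m (fun k => q (-k)) d ((kbar : ℤ) + 1 + (l+k)) * q k ≤
          Ufun m (fun k => q (-k)) (d+1) ((kbar : ℤ) + 1 + l) := by
        rw [Ufun, if_neg (by omega)]
        have hre : ∑ k ∈ Finset.Icc (-(m : ℤ)) (m : ℤ), Ufun m (fun k => q (-k)) d ((kbar : ℤ) + 1 + (l+k)) * q k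
            = ∑ k ∈ Finset.Icc (-(m : ℤ)) (m : ℤ), Ufun m (fun k => q (-k)) d ((kbar : ℤ) + 1 + l - k) * q (-k) := by
          refine Finset.sum_nbij' (fun k => -k) (fun k => -k)
            (by intro a ha; rw [mem_Icc] at *; omega) (by intro a ha; rw [mem_Icc] at *; omega)
            (by intros; omega) (by intros; omega) ?_
          intro a _
          have : (kbar : ℤ) + 1 + l - -a = (kbar : ℤ) + 1 + (l + a) := by ring
          rw [this, neg_neg]
        rw [hre]
        refine Finset.sum_le_sum fun k hk => mul_le_mul_of_nonneg_right
          (Ufun_anti hq' hsum' d _ _ (by omega)) (hq' k hk)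
      calc ∑ k ∈ Finset.Icc (-(m : ℤ)) (m : ℤ), Eex m q kbar d (l + k) * q k
          ≤ _ := step1
        _ = _ := step2
        _ ≤ _ := add_le_add hA hB
    · rename_i hband
      rcases (by omega : (kbar : ℤ) + 1 - l ≤ 0 ∨ (kbar : ℤ) + 1 + l ≤ 0) with hc | hc
      · rw [Ufun_of_nonpos _ hc]
        have := Ufun_nonneg (m := m) hq' (d+1) ((kbar : ℤ) + 1 + l); linarith
      · rw [Ufun_of_nonpos _ hc]
        have := Ufun_nonneg (m := m) hq (d+1) ((kbar : ℤ) + 1 - l); linarith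

end Aux2

section Aux3
open Finset

variable {m : ℕ}

/-- Product weight of a jump-count profile. -/
def pw (m : ℕ) (a : ℕ → ℝ) (ν : Fin m → ℕ) : ℝ :=
  ∏ i : Fin m, a ((i : ℕ) + 1) ^ ν i / ((ν i).factorial : ℝ)

/-- Total (weighted) jump size of a profile. -/
def keyN (m : ℕ) (ν : Fin m → ℕ) : ℕ := ∑ i : Fin m, ((i : ℕ) + 1) * ν i

/-- Upper bound for the exit probability: sum of profile weights of all profiles with
total size at least `u`. -/
def Bfun (m : ℕ) (qb : ℕ → ℝ) (d : ℕ) (u : ℤ) : ℝ :=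
  ∑ ν ∈ Fintype.piFinset (fun _ : Fin m => Finset.range (d + 1)),
    if u ≤ (keyN m ν : ℤ) then pw m (fun i => (d : ℝ) * qb i) ν else 0

lemma pw_nonneg {a : ℕ → ℝ} (ha : ∀ i : Fin m, 0 ≤ a ((i : ℕ) + 1)) (ν : Fin m → ℕ) :
    0 ≤ pw m a ν :=
  Finset.prod_nonneg fun i _ => div_nonneg (pow_nonneg (ha i) _) (Nat.cast_nonneg _)

lemma pw_zero (a : ℕ → ℝ) : pw m a (fun _ => 0) = 1 := by
  simp [pw]

lemma pw_scale (c : ℝ) (a : ℕ → ℝ) (ν : Fin m → ℕ) :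
    pw m (fun i => c * a i) ν = c ^ (∑ i, ν i) * pw m a ν := by
  rw [pw, pw, ← Finset.prod_pow_eq_pow_sum, ← Finset.prod_mul_distrib]
  exact Finset.prod_congr rfl fun i _ => by rw [mul_pow, mul_div_assoc]

lemma fact_id (a : ℝ) (c : ℕ) (hc : 1 ≤ c) :
    a * (a ^ (c - 1) / ((c - 1).factorial : ℝ)) = (c : ℝ) * (a ^ c / (c.factorial : ℝ)) := by
  obtain ⟨c', rfl⟩ : ∃ c', c = c' + 1 := ⟨c - 1, by omega⟩
  simp only [Nat.add_sub_cancel, Nat.factorial_succ]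
  push_cast
  have h1 : (c'.factorial : ℝ) ≠ 0 := Nat.cast_ne_zero.2 (Nat.factorial_ne_zero _)
  have h2 : ((c' : ℝ) + 1) ≠ 0 := by positivity
  field_simp
  ring

lemma KI1 {a : ℕ → ℝ} (ω : Fin m → ℕ) (k : Fin m) (hk : 1 ≤ ω k) :
    a ((k : ℕ) + 1) * pw m a (Function.update ω k (ω k - 1)) = (ω k : ℝ) * pw m a ω := by
  have herase : ∀ g : Fin m → ℕ, pw m a g =
      a ((k : ℕ) + 1) ^ g k / ((g k).factorial : ℝ) *
        ∏ i ∈ Finset.univ.erase k, a ((i : ℕ) + 1) ^ g i / ((g i).factorial : ℝ) := by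
    intro g
    rw [pw, ← Finset.mul_prod_erase _ _ (mem_univ k)]
  rw [herase, herase]
  have hsame : ∀ i ∈ Finset.univ.erase k,
      a ((i : ℕ) + 1) ^ (Function.update ω k (ω k - 1)) i / (((Function.update ω k (ω k - 1)) i).factorial : ℝ)
        = a ((i : ℕ) + 1) ^ ω i / ((ω i).factorial : ℝ) := by
    intro i hi
    rw [Function.update_of_ne (Finset.ne_of_mem_erase hi)]
  rw [Finset.prod_congr rfl hsame, Function.update_self]
  rw [← mul_assoc, ← mul_assoc]
  congr 1
  exact fact_id (a ((k : ℕ) + 1)) (ω k) hk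

lemma nat_core' (d : ℕ) : ∀ s : ℕ, d ^ (s+1) + (s+1) * d ^ s ≤ (d + 1) ^ (s+1) := by
  intro s
  induction s with
  | zero => simp [pow_succ]
  | succ s ih =>
    have e1 : (d+1) * (d ^ (s+1) + (s+1) * d ^ s)
        = d ^ (s+2) + (s+2) * d ^ (s+1) + (s+1) * d ^ s := by ring
    calc d ^ (s+2) + (s+2) * d ^ (s+1)
        ≤ (d+1) * (d ^ (s+1) + (s+1) * d ^ s) := by rw [e1]; omega
      _ ≤ (d+1) * (d + 1) ^ (s+1) := Nat.mul_le_mul_left _ ih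
      _ = (d + 1) ^ (s+2) := (pow_succ' _ _).symm

lemma nat_core (d s : ℕ) : d ^ s + s * d ^ (s - 1) ≤ (d + 1) ^ s := by
  cases s with
  | zero => simp
  | succ s => simpa using nat_core' d s

lemma sum_update_sub (ω : Fin m → ℕ) (k : Fin m) (hk : 1 ≤ ω k) :
    ∑ i, (Function.update ω k (ω k - 1)) i = (∑ i, ω i) - 1 := by
  have h1 := Finset.add_sum_erase Finset.univ (Function.update ω k (ω k - 1)) (mem_univ k)
  have h2 := Finset.add_sum_erase Finset.univ ω (mem_univ k)
  have h3 : ∑ i ∈ Finset.univ.erase k, (Function.update ω k (ω k - 1)) i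
      = ∑ i ∈ Finset.univ.erase k, ω i :=
    Finset.sum_congr rfl fun i hi => by rw [Function.update_of_ne (Finset.ne_of_mem_erase hi)]
  rw [Function.update_self] at h1
  omega

lemma keyN_update (ν : Fin m → ℕ) (k : Fin m) :
    keyN m (Function.update ν k (ν k + 1)) = keyN m ν + ((k : ℕ) + 1) := by
  have h1 := Finset.add_sum_erase Finset.univ
    (fun i : Fin m => ((i : ℕ) + 1) * (Function.update ν k (ν k + 1)) i) (mem_univ k)
  have h2 := Finset.add_sum_erase Finset.univ (fun i : Fin m => ((i : ℕ) + 1) * ν i) (mem_univ k)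
  have h3 : ∑ i ∈ Finset.univ.erase k, ((i : ℕ) + 1) * (Function.update ν k (ν k + 1)) i
      = ∑ i ∈ Finset.univ.erase k, ((i : ℕ) + 1) * ν i :=
    Finset.sum_congr rfl fun i hi => by rw [Function.update_of_ne (Finset.ne_of_mem_erase hi)]
  simp only [Function.update_self] at h1
  rw [keyN, keyN, ← h1, ← h2, h3]
  ring

lemma NC {qb : ℕ → ℝ} (hqb : ∀ i : Fin m, 0 ≤ qb ((i : ℕ) + 1)) (d : ℕ) (ω : Fin m → ℕ) :
    pw m (fun i => (d : ℝ) * qb i) ω +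
      ∑ k : Fin m, (if 1 ≤ ω k then
        qb ((k : ℕ) + 1) * pw m (fun i => (d : ℝ) * qb i) (Function.update ω k (ω k - 1))
        else 0)
      ≤ pw m (fun i => ((d : ℕ) + 1 : ℝ) * qb i) ω := by
  set s := ∑ i, ω i with hs
  set R := pw m qb ω with hR
  have hRnn : 0 ≤ R := pw_nonneg hqb ω
  have hterm : ∀ k : Fin m, (if 1 ≤ ω k then
      qb ((k : ℕ) + 1) * pw m (fun i => (d : ℝ) * qb i) (Function.update ω k (ω k - 1))
      else 0) = (ω k : ℝ) * ((d : ℝ) ^ (s - 1) * R) := by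
    intro k
    by_cases hk : 1 ≤ ω k
    · rw [if_pos hk, pw_scale, sum_update_sub ω k hk, ← hs]
      calc qb ((k : ℕ) + 1) * ((d : ℝ) ^ (s - 1) * pw m qb (Function.update ω k (ω k - 1)))
          = (d : ℝ) ^ (s - 1) * (qb ((k : ℕ) + 1) * pw m qb (Function.update ω k (ω k - 1))) := by
            ring
        _ = (d : ℝ) ^ (s - 1) * ((ω k : ℝ) * R) := by rw [KI1 ω k hk]
        _ = (ω k : ℝ) * ((d : ℝ) ^ (s - 1) * R) := by ring
    · rw [if_neg hk]
      have : ω k = 0 := by omega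
      rw [this]
      norm_num
  rw [Finset.sum_congr rfl fun k _ => hterm k, ← Finset.sum_mul, pw_scale, pw_scale, ← hs, ← hR]
  have hcast : (∑ k : Fin m, ((ω k : ℕ) : ℝ)) = (s : ℝ) := by
    rw [hs]; exact (Nat.cast_sum _ _).symm
  rw [hcast]
  have := nat_core d s
  have hcast2 : ((d : ℝ) + 1) ^ s = (((d + 1 : ℕ) : ℝ)) ^ s := by push_cast; ring
  calc (d : ℝ) ^ s * R + (s : ℝ) * ((d : ℝ) ^ (s - 1) * R)
      = ((d : ℝ) ^ s + (s : ℝ) * (d : ℝ) ^ (s - 1)) * R := by ring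
    _ ≤ ((d : ℝ) + 1) ^ s * R := by
        apply mul_le_mul_of_nonneg_right _ hRnn
        rw [hcast2]
        calc (d : ℝ) ^ s + (s : ℝ) * (d : ℝ) ^ (s - 1)
            = ((d ^ s + s * d ^ (s - 1) : ℕ) : ℝ) := by push_cast; ring
          _ ≤ (((d + 1) ^ s : ℕ) : ℝ) := Nat.cast_le.2 this
          _ = _ := by push_cast; ring

lemma sum_pos_reindex (hm : 1 ≤ m) (f : ℤ → ℝ) :
    ∑ k ∈ (Finset.Icc (-(m : ℤ)) (m : ℤ)).filter (fun k => 0 < k), f k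
      = ∑ i : Fin m, f ((i : ℕ) + 1) := by
  refine (Finset.sum_bij' (fun (k : ℤ) (hk : k ∈ (Finset.Icc (-(m : ℤ)) (m : ℤ)).filter (fun k => 0 < k)) =>
      (⟨k.toNat - 1, by simp [mem_filter, mem_Icc] at hk; omega⟩ : Fin m))
    (fun (i : Fin m) _ => ((i : ℕ) + 1 : ℤ)) ?_ ?_ ?_ ?_ ?_)
  · intro k hk; exact mem_univ _
  · intro i _
    simp only [mem_filter, mem_Icc]
    have := i.2
    omega
  · intro k hk
    simp only [mem_filter, mem_Icc] at hk
    simp only []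
    omega
  · intro i _
    ext
    simp only []
    omega
  · intro k hk
    simp only [mem_filter, mem_Icc] at hk
    congr 1
    simp only []
    omega

end Aux3

section Aux4
open Finset

variable {m : ℕ}

lemma keyN_zero : keyN m (fun _ => 0) = 0 := by simp [keyN]

lemma box_zero_mem (d : ℕ) :
    (fun _ => 0) ∈ Fintype.piFinset (fun _ : Fin m => Finset.range (d + 1)) := by
  simp [Fintype.mem_piFinset]

lemma Bfun_nonneg {qb : ℕ → ℝ} (hqb : ∀ i : Fin m, 0 ≤ qb ((i : ℕ) + 1)) (d : ℕ) (u : ℤ) :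
    0 ≤ Bfun m qb d u := by
  rw [Bfun]
  refine Finset.sum_nonneg fun ν _ => ?_
  split
  · exact pw_nonneg (fun i => mul_nonneg (Nat.cast_nonneg d) (hqb i)) ν
  · exact le_rfl

lemma Bfun_ge_one {qb : ℕ → ℝ} (hqb : ∀ i : Fin m, 0 ≤ qb ((i : ℕ) + 1)) (d : ℕ) {u : ℤ}
    (hu : u ≤ 0) : 1 ≤ Bfun m qb d u := by
  have hle := Finset.single_le_sum
    (f := fun ν : Fin m → ℕ => if u ≤ (keyN m ν : ℤ) then pw m (fun i => (d : ℝ) * qb i) ν else 0)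
    (fun ν _ => by
      split
      · exact pw_nonneg (fun i => mul_nonneg (Nat.cast_nonneg d) (hqb i)) ν
      · exact le_rfl)
    (box_zero_mem (m := m) d)
  rw [Bfun]
  refine le_trans ?_ hle
  rw [keyN_zero, if_pos (by exact_mod_cast hu), pw_zero]

lemma Bfun_anti {qb : ℕ → ℝ} (hqb : ∀ i : Fin m, 0 ≤ qb ((i : ℕ) + 1)) (d : ℕ) {u v : ℤ}
    (huv : u ≤ v) : Bfun m qb d v ≤ Bfun m qb d u := by
  rw [Bfun, Bfun]
  refine Finset.sum_le_sum fun ν _ => ?_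
  by_cases hv : v ≤ (keyN m ν : ℤ)
  · rw [if_pos hv, if_pos (le_trans huv hv)]
  · rw [if_neg hv]
    split
    · exact pw_nonneg (fun i => mul_nonneg (Nat.cast_nonneg d) (hqb i)) ν
    · exact le_rfl

lemma Bdiff {qb : ℕ → ℝ} (d : ℕ) (u : ℤ) (c : ℤ) (hc : 0 ≤ c) :
    Bfun m qb d (u - c) - Bfun m qb d u =
      ∑ ν ∈ Fintype.piFinset (fun _ : Fin m => Finset.range (d + 1)),
        (if u - c ≤ (keyN m ν : ℤ) ∧ ¬ u ≤ (keyN m ν : ℤ)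
          then pw m (fun i => (d : ℝ) * qb i) ν else 0) := by
  rw [Bfun, Bfun, ← Finset.sum_sub_distrib]
  refine Finset.sum_congr rfl fun ν _ => ?_
  by_cases h1 : u ≤ (keyN m ν : ℤ)
  · rw [if_pos (by omega), if_pos h1, if_neg (by tauto), sub_self]
  · rw [if_neg h1]
    by_cases h2 : u - c ≤ (keyN m ν : ℤ)
    · rw [if_pos h2, if_pos ⟨h2, h1⟩, sub_zero]
    · rw [if_neg h2, if_neg (by tauto), sub_zero]

lemma Bshift {qb : ℕ → ℝ} (hqb : ∀ i : Fin m, 0 ≤ qb ((i : ℕ) + 1)) (d : ℕ) (u : ℤ) (i : Fin m) :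
    ∑ ν ∈ Fintype.piFinset (fun _ : Fin m => Finset.range (d + 1)),
      (if u - ((i : ℕ) + 1) ≤ (keyN m ν : ℤ) ∧ ¬ u ≤ (keyN m ν : ℤ)
        then qb ((i : ℕ) + 1) * pw m (fun j => (d : ℝ) * qb j) ν else 0)
    ≤ ∑ ω ∈ Fintype.piFinset (fun _ : Fin m => Finset.range (d + 2)),
      (if 1 ≤ ω i ∧ u ≤ (keyN m ω : ℤ)
        then qb ((i : ℕ) + 1) * pw m (fun j => (d : ℝ) * qb j) (Function.update ω i (ω i - 1))
        else 0) := by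
  rw [← Finset.sum_filter, ← Finset.sum_filter]
  set S := (Fintype.piFinset (fun _ : Fin m => Finset.range (d + 1))).filter
    (fun ν => u - ((i : ℕ) + 1) ≤ (keyN m ν : ℤ) ∧ ¬ u ≤ (keyN m ν : ℤ)) with hS
  set T := (Fintype.piFinset (fun _ : Fin m => Finset.range (d + 2))).filter
    (fun ω => 1 ≤ ω i ∧ u ≤ (keyN m ω : ℤ)) with hT
  set φ : (Fin m → ℕ) → (Fin m → ℕ) := fun ν => Function.update ν i (ν i + 1) with hφ
  have hinj : ∀ ν₁ ∈ S, ∀ ν₂ ∈ S, φ ν₁ = φ ν₂ → ν₁ = ν₂ := by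
    intro ν₁ _ ν₂ _ hψ
    funext j
    by_cases hj : j = i
    · subst hj
      have := congrFun hψ j
      simp only [hφ, Function.update_self] at this
      omega
    · have := congrFun hψ j
      simpa only [hφ, Function.update_of_ne hj] using this
  have himg : ∀ ν ∈ S, φ ν ∈ T := by
    intro ν hν
    rw [hS, mem_filter, Fintype.mem_piFinset] at hν
    rw [hT, mem_filter, Fintype.mem_piFinset]
    obtain ⟨hbox, hk1, hk2⟩ := hν
    refine ⟨fun j => ?_, ?_, ?_⟩
    · by_cases hj : j = i
      · subst hj
        simp only [hφ, Function.update_self, mem_range]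
        have := hbox j
        rw [mem_range] at this
        omega
      · simp only [hφ, Function.update_of_ne hj, mem_range]
        have := hbox j
        rw [mem_range] at this
        omega
    · simp only [hφ, Function.update_self]
      omega
    · rw [show φ ν = Function.update ν i (ν i + 1) from rfl, keyN_update]
      push_cast
      omega
  have hval : ∀ ν ∈ S, qb ((i : ℕ) + 1) * pw m (fun j => (d : ℝ) * qb j) ν =
      qb ((i : ℕ) + 1) * pw m (fun j => (d : ℝ) * qb j) (Function.update (φ ν) i ((φ ν) i - 1)) := by
    intro ν _
    congr 2
    funext j
    by_cases hj : j = i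
    · subst hj
      simp only [hφ, Function.update_self]
      omega
    · simp only [hφ, Function.update_of_ne hj]
  calc ∑ ν ∈ S, qb ((i : ℕ) + 1) * pw m (fun j => (d : ℝ) * qb j) ν
      = ∑ ν ∈ S, qb ((i : ℕ) + 1) * pw m (fun j => (d : ℝ) * qb j)
          (Function.update (φ ν) i ((φ ν) i - 1)) := Finset.sum_congr rfl hval
    _ = ∑ ω ∈ S.image φ, qb ((i : ℕ) + 1) * pw m (fun j => (d : ℝ) * qb j)
          (Function.update ω i (ω i - 1)) := (Finset.sum_image (f := fun ω => qb ((i : ℕ) + 1) *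
            pw m (fun j => (d : ℝ) * qb j) (Function.update ω i (ω i - 1))) hinj).symm
    _ ≤ ∑ ω ∈ T, qb ((i : ℕ) + 1) * pw m (fun j => (d : ℝ) * qb j)
          (Function.update ω i (ω i - 1)) := by
        refine Finset.sum_le_sum_of_subset_of_nonneg ?_ (fun ω _ _ => ?_)
        · intro ω hω
          rw [Finset.mem_image] at hω
          obtain ⟨ν, hν, rfl⟩ := hω
          exact himg ν hν
        · exact mul_nonneg (hqb i)
            (pw_nonneg (fun j => mul_nonneg (Nat.cast_nonneg d) (hqb j)) _)

lemma Ufun_le_Bfun {qb : ℕ → ℝ} {ρ : ℤ → ℝ} (hm : 1 ≤ m)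
    (hqb : ∀ i : Fin m, 0 ≤ qb ((i : ℕ) + 1))
    (hρ : ∀ k ∈ Finset.Icc (-(m : ℤ)) (m : ℤ), 0 ≤ ρ k)
    (hρ1 : ∑ k ∈ Finset.Icc (-(m : ℤ)) (m : ℤ), ρ k = 1)
    (hρq : ∀ i : Fin m, ρ ((i : ℕ) + 1) ≤ qb ((i : ℕ) + 1)) :
    ∀ d u, Ufun m ρ d u ≤ Bfun m qb d u := by
  intro d
  induction d with
  | zero =>
    intro u
    rw [Ufun]
    split
    · exact Bfun_ge_one hqb 0 (by assumption)
    · exact Bfun_nonneg hqb 0 u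
  | succ d ih =>
    intro u
    by_cases hu : u ≤ 0
    · rw [Ufun_of_nonpos _ hu]
      exact Bfun_ge_one hqb (d+1) hu
    rw [Ufun, if_neg hu]
    have stepA : ∑ k ∈ Finset.Icc (-(m : ℤ)) (m : ℤ), Ufun m ρ d (u - max k 0) * ρ k
        ≤ ∑ k ∈ Finset.Icc (-(m : ℤ)) (m : ℤ), Bfun m qb d (u - max k 0) * ρ k :=
      Finset.sum_le_sum fun k hk => mul_le_mul_of_nonneg_right (ih _) (hρ k hk)
    have stepB : ∑ k ∈ Finset.Icc (-(m : ℤ)) (m : ℤ), Bfun m qb d (u - max k 0) * ρ k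
        = (∑ k ∈ (Finset.Icc (-(m : ℤ)) (m : ℤ)).filter (fun k => 0 < k),
            Bfun m qb d (u - k) * ρ k)
          + ∑ k ∈ (Finset.Icc (-(m : ℤ)) (m : ℤ)).filter (fun k => ¬ 0 < k),
            Bfun m qb d u * ρ k := by
      rw [← Finset.sum_filter_add_sum_filter_not (Finset.Icc (-(m : ℤ)) (m : ℤ)) (fun k => 0 < k)]
      congr 1
      · refine Finset.sum_congr rfl fun k hk => ?_
        rw [mem_filter] at hk
        rw [max_eq_left hk.2.le]
      · refine Finset.sum_congr rfl fun k hk => ?_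
        rw [mem_filter] at hk
        rw [max_eq_right (by omega : k ≤ 0), sub_zero]
    have stepC : ∑ k ∈ (Finset.Icc (-(m : ℤ)) (m : ℤ)).filter (fun k => 0 < k),
          Bfun m qb d (u - k) * ρ k
        = (∑ k ∈ (Finset.Icc (-(m : ℤ)) (m : ℤ)).filter (fun k => 0 < k),
            Bfun m qb d u * ρ k)
          + ∑ k ∈ (Finset.Icc (-(m : ℤ)) (m : ℤ)).filter (fun k => 0 < k),
            (Bfun m qb d (u - k) - Bfun m qb d u) * ρ k := by
      rw [← Finset.sum_add_distrib]
      exact Finset.sum_congr rfl fun k _ => by ring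
    have stepD : (∑ k ∈ (Finset.Icc (-(m : ℤ)) (m : ℤ)).filter (fun k => 0 < k),
          Bfun m qb d u * ρ k)
        + (∑ k ∈ (Finset.Icc (-(m : ℤ)) (m : ℤ)).filter (fun k => ¬ 0 < k),
            Bfun m qb d u * ρ k) = Bfun m qb d u := by
      rw [Finset.sum_filter_add_sum_filter_not, ← Finset.mul_sum, hρ1, mul_one]
    have stepE : ∑ k ∈ (Finset.Icc (-(m : ℤ)) (m : ℤ)).filter (fun k => 0 < k),
          (Bfun m qb d (u - k) - Bfun m qb d u) * ρ k
        ≤ ∑ i : Fin m, (Bfun m qb d (u - ((i : ℕ) + 1)) - Bfun m qb d u) * qb ((i : ℕ) + 1) := by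
      rw [sum_pos_reindex hm (fun k => (Bfun m qb d (u - k) - Bfun m qb d u) * ρ k)]
      refine Finset.sum_le_sum fun i _ => ?_
      have hΔ : 0 ≤ Bfun m qb d (u - ((i : ℕ) + 1)) - Bfun m qb d u :=
        sub_nonneg.2 (Bfun_anti hqb d (by omega))
      exact mul_le_mul_of_nonneg_left (hρq i) hΔ
    have stepF : Bfun m qb d u
        + ∑ i : Fin m, (Bfun m qb d (u - ((i : ℕ) + 1)) - Bfun m qb d u) * qb ((i : ℕ) + 1)
        ≤ Bfun m qb (d + 1) u := by
      have hdiff : ∀ i : Fin m,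
          (Bfun m qb d (u - ((i : ℕ) + 1)) - Bfun m qb d u) * qb ((i : ℕ) + 1)
          = ∑ ν ∈ Fintype.piFinset (fun _ : Fin m => Finset.range (d + 1)),
            (if u - ((i : ℕ) + 1) ≤ (keyN m ν : ℤ) ∧ ¬ u ≤ (keyN m ν : ℤ)
              then qb ((i : ℕ) + 1) * pw m (fun j => (d : ℝ) * qb j) ν else 0) := by
        intro i
        rw [Bdiff d u ((i : ℕ) + 1) (by positivity), Finset.sum_mul]
        exact Finset.sum_congr rfl fun ν _ => by rw [ite_mul, zero_mul]; split <;> ring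
      have hsum1 : ∑ i : Fin m,
          (Bfun m qb d (u - ((i : ℕ) + 1)) - Bfun m qb d u) * qb ((i : ℕ) + 1)
          ≤ ∑ i : Fin m, ∑ ω ∈ Fintype.piFinset (fun _ : Fin m => Finset.range (d + 2)),
            (if 1 ≤ ω i ∧ u ≤ (keyN m ω : ℤ)
              then qb ((i : ℕ) + 1) * pw m (fun j => (d : ℝ) * qb j)
                (Function.update ω i (ω i - 1)) else 0) := by
        refine Finset.sum_le_sum fun i _ => ?_
        rw [hdiff i]
        exact Bshift hqb d u i
      have hB0 : Bfun m qb d u ≤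
          ∑ ω ∈ Fintype.piFinset (fun _ : Fin m => Finset.range (d + 2)),
            (if u ≤ (keyN m ω : ℤ) then pw m (fun j => (d : ℝ) * qb j) ω else 0) := by
        rw [Bfun]
        refine Finset.sum_le_sum_of_subset_of_nonneg ?_ (fun ω _ _ => ?_)
        · intro ν hν
          rw [Fintype.mem_piFinset] at hν ⊢
          intro j
          have := hν j
          rw [mem_range] at this ⊢
          omega
        · split
          · exact pw_nonneg (fun j => mul_nonneg (Nat.cast_nonneg d) (hqb j)) _
          · exact le_rfl
      have hcomm : ∑ i : Fin m, ∑ ω ∈ Fintype.piFinset (fun _ : Fin m => Finset.range (d + 2)),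
            (if 1 ≤ ω i ∧ u ≤ (keyN m ω : ℤ)
              then qb ((i : ℕ) + 1) * pw m (fun j => (d : ℝ) * qb j)
                (Function.update ω i (ω i - 1)) else 0)
          = ∑ ω ∈ Fintype.piFinset (fun _ : Fin m => Finset.range (d + 2)), ∑ i : Fin m,
            (if 1 ≤ ω i ∧ u ≤ (keyN m ω : ℤ)
              then qb ((i : ℕ) + 1) * pw m (fun j => (d : ℝ) * qb j)
                (Function.update ω i (ω i - 1)) else 0) := Finset.sum_comm
      have hptw : ∀ ω ∈ Fintype.piFinset (fun _ : Fin m => Finset.range (d + 2)),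
          ((if u ≤ (keyN m ω : ℤ) then pw m (fun j => (d : ℝ) * qb j) ω else 0)
            + ∑ i : Fin m, (if 1 ≤ ω i ∧ u ≤ (keyN m ω : ℤ)
              then qb ((i : ℕ) + 1) * pw m (fun j => (d : ℝ) * qb j)
                (Function.update ω i (ω i - 1)) else 0))
          ≤ (if u ≤ (keyN m ω : ℤ) then pw m (fun j => ((d + 1 : ℕ) : ℝ) * qb j) ω else 0) := by
        intro ω _
        by_cases hω : u ≤ (keyN m ω : ℤ)
        · rw [if_pos hω, if_pos hω]
          have hcongr : ∀ i : Fin m, (if 1 ≤ ω i ∧ u ≤ (keyN m ω : ℤ)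
              then qb ((i : ℕ) + 1) * pw m (fun j => (d : ℝ) * qb j)
                (Function.update ω i (ω i - 1)) else 0)
              = (if 1 ≤ ω i
              then qb ((i : ℕ) + 1) * pw m (fun j => (d : ℝ) * qb j)
                (Function.update ω i (ω i - 1)) else 0) := by
            intro i
            apply if_congr (and_iff_left hω) rfl rfl
          rw [Finset.sum_congr rfl fun i _ => hcongr i]
          have := NC hqb d ω
          have hfun : (fun j => ((d + 1 : ℕ) : ℝ) * qb j) = (fun j => ((d : ℕ) + 1 : ℝ) * qb j) := by
            funext j
            push_cast
            ring
          rw [hfun]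
          exact this
        · rw [if_neg hω, if_neg hω]
          rw [Finset.sum_eq_zero fun i _ => by rw [if_neg (by tauto)]]
          norm_num
      calc Bfun m qb d u
          + ∑ i : Fin m, (Bfun m qb d (u - ((i : ℕ) + 1)) - Bfun m qb d u) * qb ((i : ℕ) + 1)
          ≤ (∑ ω ∈ Fintype.piFinset (fun _ : Fin m => Finset.range (d + 2)),
            (if u ≤ (keyN m ω : ℤ) then pw m (fun j => (d : ℝ) * qb j) ω else 0))
            + ∑ ω ∈ Fintype.piFinset (fun _ : Fin m => Finset.range (d + 2)), ∑ i : Fin m,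
            (if 1 ≤ ω i ∧ u ≤ (keyN m ω : ℤ)
              then qb ((i : ℕ) + 1) * pw m (fun j => (d : ℝ) * qb j)
                (Function.update ω i (ω i - 1)) else 0) := by
            rw [← hcomm]
            exact add_le_add hB0 hsum1
        _ = ∑ ω ∈ Fintype.piFinset (fun _ : Fin m => Finset.range (d + 2)),
            ((if u ≤ (keyN m ω : ℤ) then pw m (fun j => (d : ℝ) * qb j) ω else 0)
            + ∑ i : Fin m, (if 1 ≤ ω i ∧ u ≤ (keyN m ω : ℤ)
              then qb ((i : ℕ) + 1) * pw m (fun j => (d : ℝ) * qb j)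
                (Function.update ω i (ω i - 1)) else 0)) := (Finset.sum_add_distrib).symm
        _ ≤ ∑ ω ∈ Fintype.piFinset (fun _ : Fin m => Finset.range (d + 2)),
            (if u ≤ (keyN m ω : ℤ) then pw m (fun j => ((d + 1 : ℕ) : ℝ) * qb j) ω else 0) :=
            Finset.sum_le_sum hptw
        _ = Bfun m qb (d + 1) u := rfl
    calc ∑ k ∈ Finset.Icc (-(m : ℤ)) (m : ℤ), Ufun m ρ d (u - max k 0) * ρ k
        ≤ ∑ k ∈ Finset.Icc (-(m : ℤ)) (m : ℤ), Bfun m qb d (u - max k 0) * ρ k := stepA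
      _ ≤ Bfun m qb d u
          + ∑ i : Fin m, (Bfun m qb d (u - ((i : ℕ) + 1)) - Bfun m qb d u) * qb ((i : ℕ) + 1) := by
          rw [stepB, stepC]
          linarith [stepD, stepE]
      _ ≤ Bfun m qb (d + 1) u := stepF

end Aux4

section Aux5
open Finset

/-- Sum of profile weights over all profiles with exact total size `N`. -/
def Tprof (w : ℕ → ℝ) (k N : ℕ) : ℝ :=
  ∑ ν ∈ (Fintype.piFinset (fun _ : Fin k => Finset.range (N + 1))).filter
      (fun ν => keyN k ν = N), pw k w ν

lemma coord_le_keyN {k : ℕ} (ν : Fin k → ℕ) (i : Fin k) : ν i ≤ keyN k ν := by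
  have h1 : ((i : ℕ) + 1) * ν i ≤ keyN k ν :=
    Finset.single_le_sum (f := fun i : Fin k => ((i : ℕ) + 1) * ν i)
      (fun _ _ => Nat.zero_le _) (mem_univ i)
  calc ν i = 1 * ν i := (one_mul _).symm
    _ ≤ ((i : ℕ) + 1) * ν i := Nat.mul_le_mul_right _ (by omega)
    _ ≤ keyN k ν := h1

lemma keyN_snoc {k : ℕ} (ν : Fin (k + 1) → ℕ) :
    keyN (k + 1) ν = keyN k (fun i => ν i.castSucc) + (k + 1) * ν (Fin.last k) := by
  rw [keyN, keyN, Fin.sum_univ_castSucc]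
  simp [Fin.val_last]

lemma pw_snoc {k : ℕ} (w : ℕ → ℝ) (ν : Fin (k + 1) → ℕ) :
    pw (k + 1) w ν = pw k w (fun i => ν i.castSucc) *
      (w (k + 1) ^ ν (Fin.last k) / ((ν (Fin.last k)).factorial : ℝ)) := by
  rw [pw, pw, Fin.prod_univ_castSucc]
  simp [Fin.val_last]

lemma Wseq_succ (w : ℕ → ℝ) {k : ℕ} (hk : 1 ≤ k) :
    Wseq w (k + 1) = w (k + 1) + Wseq w k ^ (((k : ℝ) + 1) / (k : ℝ)) := by
  obtain ⟨k', rfl⟩ : ∃ k', k = k' + 1 := ⟨k - 1, by omega⟩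
  rw [show k' + 1 + 1 = k' + 2 from rfl, Wseq]
  congr 2 <;> push_cast <;> ring

lemma Wseq_pos (w : ℕ → ℝ) (hw1 : 0 < w 1) :
    ∀ k, 1 ≤ k → (∀ i, 2 ≤ i → i ≤ k → 0 ≤ w i) → 0 < Wseq w k := by
  intro k
  induction k with
  | zero => omega
  | succ k ih =>
    intro _ hw
    rcases Nat.eq_zero_or_pos k with rfl | hk
    · exact hw1
    rw [Wseq_succ w hk]
    have hWk : 0 < Wseq w k := ih hk fun i h2 hik => hw i h2 (by omega)
    have := Real.rpow_pos_of_pos hWk (((k : ℝ) + 1) / (k : ℝ))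
    have := hw (k + 1) (by omega) le_rfl
    linarith

lemma binom_div (a b : ℝ) (F : ℕ) :
    ∑ j ∈ Finset.range (F + 1), a ^ j / (j.factorial : ℝ) * (b ^ (F - j) / ((F - j).factorial : ℝ))
      = (a + b) ^ F / (F.factorial : ℝ) := by
  rw [add_pow, Finset.sum_div]
  refine Finset.sum_congr rfl fun j hj => ?_
  rw [mem_range] at hj
  have hjF : j ≤ F := by omega
  rw [Nat.cast_choose ℝ hjF]
  have h1 : (j.factorial : ℝ) ≠ 0 := Nat.cast_ne_zero.2 (Nat.factorial_ne_zero _)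
  have h2 : ((F - j).factorial : ℝ) ≠ 0 := Nat.cast_ne_zero.2 (Nat.factorial_ne_zero _)
  have h3 : (F.factorial : ℝ) ≠ 0 := Nat.cast_ne_zero.2 (Nat.factorial_ne_zero _)
  field_simp

lemma Tprof_le (w : ℕ → ℝ) (hw1 : 0 < w 1) :
    ∀ k, 1 ≤ k → (∀ i, 1 ≤ i → i ≤ k → 0 ≤ w i) → ∀ N : ℕ,
      Tprof w k N ≤ Wseq w k ^ ((N : ℝ) / (k : ℝ)) / ((N / k).factorial : ℝ) := by
  intro k
  induction k with
  | zero => omega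
  | succ k ih =>
    intro _ hw N
    rcases Nat.eq_zero_or_pos k with rfl | hk
    · -- base case k+1 = 1
      have hset : (Fintype.piFinset (fun _ : Fin 1 => Finset.range (N + 1))).filter
          (fun ν => keyN 1 ν = N) = {fun _ => N} := by
        ext ν
        simp only [mem_filter, Fintype.mem_piFinset, mem_range, mem_singleton, keyN,
          Fin.sum_univ_one]
        constructor
        · rintro ⟨hb, hkey⟩
          funext i
          have hi : i = 0 := Subsingleton.elim i 0
          rw [hi]
          simpa using hkey
        · rintro rfl
          constructor
          · intro i; simp
          · simp
      rw [Tprof, hset, Finset.sum_singleton]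
      have hpw : pw 1 w (fun _ => N) = w 1 ^ N / (N.factorial : ℝ) := by
        rw [pw, Fin.prod_univ_one]
        norm_num
      rw [hpw]
      have hW1 : Wseq w 1 = w 1 := rfl
      rw [hW1, Nat.cast_one, div_one, Nat.div_one, Real.rpow_natCast]
    · -- inductive step: k ≥ 1, prove for k+1
      have hwk : ∀ i, 1 ≤ i → i ≤ k → 0 ≤ w i := fun i h1 h2 => hw i h1 (by omega)
      have hWk : 0 < Wseq w k := Wseq_pos w hw1 k hk fun i h2 hik => hw i (by omega) (by omega)
      set V : ℝ := Wseq w k ^ (((k : ℝ) + 1) / (k : ℝ)) with hV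
      have hVpos : 0 < V := Real.rpow_pos_of_pos hWk _
      have hWsucc : Wseq w (k + 1) = w (k + 1) + V := Wseq_succ w hk
      have hWspos : 0 < Wseq w (k + 1) := by
        rw [hWsucc]
        have := hw (k + 1) (by omega) le_rfl
        linarith
      set F : ℕ := N / (k + 1) with hF
      set θ : ℝ := (N : ℝ) / ((k : ℝ) + 1) - (F : ℝ) with hθ
      have hk1pos : (0 : ℝ) < (k : ℝ) + 1 := by positivity
      have hθ0 : 0 ≤ θ := by
        rw [hθ]
        have : (F : ℝ) * ((k : ℝ) + 1) ≤ (N : ℝ) := by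
          have := Nat.div_mul_le_self N (k + 1)
          calc (F : ℝ) * ((k : ℝ) + 1) = ((N / (k+1) * (k+1) : ℕ) : ℝ) := by push_cast; ring
            _ ≤ (N : ℝ) := Nat.cast_le.2 this
        rw [sub_nonneg, le_div_iff₀ hk1pos]
        exact this
      have hθ1 : θ ≤ 1 := by
        rw [hθ]
        have hnat : N < (N / (k+1) + 1) * (k + 1) := by
          have h1 := Nat.div_add_mod N (k+1)
          have h2 := Nat.mod_lt N (show 0 < k+1 by omega)
          nlinarith [Nat.div_mul_le_self N (k+1)]
        have hlt : (N : ℝ) < ((F : ℝ) + 1) * ((k : ℝ) + 1) := by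
          calc (N : ℝ) < (((N / (k+1) + 1) * (k + 1) : ℕ) : ℝ) := Nat.cast_lt.2 hnat
            _ = ((F : ℝ) + 1) * ((k : ℝ) + 1) := by push_cast; ring
        have := (div_lt_iff₀ hk1pos).2 (by nlinarith : (N : ℝ) < (((F : ℝ) + 1)) * ((k : ℝ) + 1))
        linarith
      -- fiberwise decomposition over the last coordinate
      have hfib : Tprof w (k + 1) N =
          ∑ j ∈ Finset.range (N + 1),
            ∑ ν ∈ ((Fintype.piFinset (fun _ : Fin (k+1) => Finset.range (N + 1))).filter
              (fun ν => keyN (k+1) ν = N)).filter (fun ν => ν (Fin.last k) = j),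
              pw (k+1) w ν := by
        rw [Tprof]
        refine (Finset.sum_fiberwise_of_maps_to ?_ _).symm
        intro ν hν
        rw [mem_filter, Fintype.mem_piFinset] at hν
        exact hν.1 (Fin.last k)
      have hterm : ∀ j ∈ Finset.range (N + 1),
          (∑ ν ∈ ((Fintype.piFinset (fun _ : Fin (k+1) => Finset.range (N + 1))).filter
              (fun ν => keyN (k+1) ν = N)).filter (fun ν => ν (Fin.last k) = j),
              pw (k+1) w ν)
          ≤ (if (k+1)*j ≤ N then
              w (k+1) ^ j / (j.factorial : ℝ) * Tprof w k (N - (k+1)*j) else 0) := by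
        intro j _
        by_cases hj : (k+1)*j ≤ N
        · rw [if_pos hj]
          set N' : ℕ := N - (k+1)*j with hN'
          have heq : ∑ ν ∈ ((Fintype.piFinset (fun _ : Fin (k+1) => Finset.range (N + 1))).filter
              (fun ν => keyN (k+1) ν = N)).filter (fun ν => ν (Fin.last k) = j),
              pw (k+1) w ν
              = ∑ ν' ∈ (Fintype.piFinset (fun _ : Fin k => Finset.range (N' + 1))).filter
                (fun ν' => keyN k ν' = N'),
                w (k+1) ^ j / (j.factorial : ℝ) * pw k w ν' := by
            refine Finset.sum_nbij' (fun ν => (fun i => ν i.castSucc))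
              (fun ν' => Fin.snoc ν' j) ?_ ?_ ?_ ?_ ?_
            · intro ν hν
              rw [mem_filter, mem_filter, Fintype.mem_piFinset] at hν
              obtain ⟨⟨hbox, hkey⟩, hlast⟩ := hν
              rw [mem_filter, Fintype.mem_piFinset]
              have hdec := keyN_snoc ν
              rw [hlast] at hdec
              have hkey' : keyN k (fun i => ν i.castSucc) = N' := by
                rw [hN']
                exact Nat.eq_sub_of_add_eq (by rw [← hdec, hkey])
              constructor
              · intro i
                rw [mem_range]
                have h2 := coord_le_keyN (fun i => ν i.castSucc) i
                omega
              · exact hkey'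
            · intro ν' hν'
              rw [mem_filter, Fintype.mem_piFinset] at hν'
              obtain ⟨hbox, hkey⟩ := hν'
              rw [mem_filter, mem_filter, Fintype.mem_piFinset]
              have hdec := keyN_snoc (Fin.snoc ν' j : Fin (k+1) → ℕ)
              rw [Fin.snoc_last] at hdec
              have hres : (fun i => (Fin.snoc ν' j : Fin (k+1) → ℕ) i.castSucc) = ν' := by
                funext i; rw [Fin.snoc_castSucc]
              rw [hres] at hdec
              refine ⟨⟨?_, ?_⟩, ?_⟩
              · intro i
                rw [mem_range]
                have hjN : j ≤ N := le_trans (Nat.le_mul_of_pos_left j (by omega : 0 < k+1)) hj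
                induction i using Fin.lastCases with
                | last => rw [Fin.snoc_last]; omega
                | cast i' =>
                  rw [Fin.snoc_castSucc]
                  have h1 := hbox i'
                  have hNle : N' ≤ N := Nat.sub_le _ _
                  rw [mem_range] at h1
                  omega
              · rw [hdec, hkey, hN']
                exact Nat.sub_add_cancel hj
              · rw [Fin.snoc_last]
            · intro ν hν
              rw [mem_filter] at hν
              have hlast := hν.2
              funext i
              induction i using Fin.lastCases with
              | last => rw [Fin.snoc_last, hlast]
              | cast i' => rw [Fin.snoc_castSucc]
            · intro ν' _
              funext i; rw [Fin.snoc_castSucc]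
            · intro ν hν
              rw [mem_filter] at hν
              rw [pw_snoc w ν, hν.2]
              ring
          rw [heq, ← Finset.mul_sum, ← Tprof]
        · rw [if_neg hj]
          refine le_of_eq (Finset.sum_eq_zero fun ν hν => ?_)
          exfalso
          rw [mem_filter, mem_filter] at hν
          obtain ⟨⟨_, hkey⟩, hlast⟩ := hν
          have h1 : ((Fin.last k : Fin (k+1)) : ℕ) + 1 = k + 1 := by rw [Fin.val_last]
          have h2 : (((Fin.last k : Fin (k+1)) : ℕ) + 1) * ν (Fin.last k) ≤ keyN (k+1) ν :=
            Finset.single_le_sum (f := fun i : Fin (k+1) => ((i : ℕ) + 1) * ν i)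
              (fun _ _ => Nat.zero_le _) (mem_univ _)
          rw [h1, hlast, hkey] at h2
          omega
      -- per-j analytic bound
      have hanal : ∀ j ∈ Finset.range (N + 1),
          (if (k+1)*j ≤ N then
            w (k+1) ^ j / (j.factorial : ℝ) * Tprof w k (N - (k+1)*j) else 0)
          ≤ (if (k+1)*j ≤ N then
            w (k+1) ^ j / (j.factorial : ℝ) * (V ^ θ * (V ^ (F - j) / ((F - j).factorial : ℝ)))
            else 0) := by
        intro j _
        by_cases hj : (k+1)*j ≤ N
        · rw [if_pos hj, if_pos hj]
          set N' : ℕ := N - (k+1)*j with hN'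
          have hjF : j ≤ F := by
            rw [hF, Nat.le_div_iff_mul_le (by omega : 0 < k + 1)]
            exact le_trans (le_of_eq (Nat.mul_comm j (k+1))) hj
          have hT := ih hk hwk N'
          have hdiv : N' / (k+1) = F - j := by
            rw [hN', hF]
            exact Nat.sub_mul_div N (k+1) j
          have hfac : (F - j).factorial ≤ (N' / k).factorial := by
            apply Nat.factorial_le
            rw [← hdiv]
            exact Nat.div_le_div_left (by omega) hk
          have hexp : Wseq w k ^ ((N' : ℝ) / (k : ℝ)) = V ^ θ * V ^ (F - j) := by
            have hcast : (N' : ℝ) = (N : ℝ) - ((k : ℝ) + 1) * (j : ℝ) := by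
              rw [hN']
              push_cast [hj]
              ring
            have he1 : (N' : ℝ) / (k : ℝ) = (((k : ℝ) + 1) / (k : ℝ)) * ((N : ℝ) / ((k:ℝ)+1) - (j:ℝ)) := by
              rw [hcast]
              field_simp
            have he2 : (N : ℝ) / ((k:ℝ)+1) - (j:ℝ) = θ + ((F - j : ℕ) : ℝ) := by
              rw [hθ]
              push_cast [hjF]
              ring
            rw [he1, Real.rpow_mul hWk.le, ← hV, he2, Real.rpow_add hVpos,
              Real.rpow_natCast]
          have hle1 : Tprof w k N' ≤ V ^ θ * (V ^ (F - j) / ((F - j).factorial : ℝ)) := by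
            refine le_trans hT ?_
            rw [hexp]
            rw [mul_div_assoc]
            apply mul_le_mul_of_nonneg_left _ (Real.rpow_nonneg hVpos.le θ)
            apply div_le_div_of_nonneg_left (pow_nonneg hVpos.le _) _ _
            · exact_mod_cast Nat.factorial_pos _
            · exact_mod_cast hfac
          refine mul_le_mul_of_nonneg_left hle1 ?_
          have hwp := hw (k+1) (by omega) le_rfl
          positivity
        · rw [if_neg hj, if_neg hj]
      -- sum the analytic bounds
      have hsupp : ∑ j ∈ Finset.range (N + 1),
          (if (k+1)*j ≤ N then
            w (k+1) ^ j / (j.factorial : ℝ) * (V ^ θ * (V ^ (F - j) / ((F - j).factorial : ℝ)))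
            else 0)
          ≤ V ^ θ * ((w (k+1) + V) ^ F / (F.factorial : ℝ)) := by
        rw [← Finset.sum_filter]
        have hsub : (Finset.range (N + 1)).filter (fun j => (k+1)*j ≤ N) ⊆ Finset.range (F + 1) := by
          intro j hj
          rw [mem_filter] at hj
          rw [mem_range]
          have : j ≤ F := by
            rw [hF, Nat.le_div_iff_mul_le (by omega : 0 < k + 1)]
            exact le_trans (le_of_eq (Nat.mul_comm j (k+1))) hj.2
          omega
        calc ∑ j ∈ (Finset.range (N + 1)).filter (fun j => (k+1)*j ≤ N),
            w (k+1) ^ j / (j.factorial : ℝ) * (V ^ θ * (V ^ (F - j) / ((F - j).factorial : ℝ)))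
            ≤ ∑ j ∈ Finset.range (F + 1),
              w (k+1) ^ j / (j.factorial : ℝ) * (V ^ θ * (V ^ (F - j) / ((F - j).factorial : ℝ))) := by
              refine Finset.sum_le_sum_of_subset_of_nonneg hsub fun j _ _ => ?_
              have hw1' := hw (k+1) (by omega) le_rfl
              positivity
          _ = V ^ θ * ∑ j ∈ Finset.range (F + 1),
              w (k+1) ^ j / (j.factorial : ℝ) * (V ^ (F - j) / ((F - j).factorial : ℝ)) := by
              rw [Finset.mul_sum]
              exact Finset.sum_congr rfl fun j _ => by ring
          _ = V ^ θ * ((w (k+1) + V) ^ F / (F.factorial : ℝ)) := by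
              rw [binom_div]
      -- conclude
      have hfinal : V ^ θ * ((w (k+1) + V) ^ F / (F.factorial : ℝ))
          ≤ Wseq w (k+1) ^ ((N : ℝ) / ((k : ℕ) + 1 : ℝ)) / (F.factorial : ℝ) := by
        have hVle : V ≤ Wseq w (k + 1) := by
          rw [hWsucc]
          have := hw (k + 1) (by omega) le_rfl
          linarith
        have h1 : V ^ θ ≤ Wseq w (k+1) ^ θ := Real.rpow_le_rpow hVpos.le hVle hθ0
        have h2 : (w (k+1) + V) ^ F = Wseq w (k+1) ^ F := by rw [← hWsucc]
        have h3 : Wseq w (k+1) ^ θ * Wseq w (k+1) ^ F = Wseq w (k+1) ^ ((N : ℝ) / ((k:ℝ)+1)) := by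
          rw [← Real.rpow_natCast (Wseq w (k+1)) F, ← Real.rpow_add hWspos]
          congr 1
          rw [hθ]
          ring
        calc V ^ θ * ((w (k+1) + V) ^ F / (F.factorial : ℝ))
            ≤ Wseq w (k+1) ^ θ * ((w (k+1) + V) ^ F / (F.factorial : ℝ)) := by
              apply mul_le_mul_of_nonneg_right h1
              have hw1' := hw (k+1) (by omega) le_rfl
              positivity
          _ = (Wseq w (k+1) ^ θ * Wseq w (k+1) ^ F) / (F.factorial : ℝ) := by
              rw [h2]; ring
          _ = Wseq w (k+1) ^ ((N : ℝ) / ((k:ℝ)+1)) / (F.factorial : ℝ) := by rw [h3]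
          _ = Wseq w (k+1) ^ ((N : ℝ) / ((k : ℕ) + 1 : ℝ)) / (F.factorial : ℝ) := by norm_num
      calc Tprof w (k+1) N
          ≤ ∑ j ∈ Finset.range (N + 1),
            (if (k+1)*j ≤ N then
              w (k+1) ^ j / (j.factorial : ℝ) * Tprof w k (N - (k+1)*j) else 0) := by
            rw [hfib]
            exact Finset.sum_le_sum hterm
        _ ≤ ∑ j ∈ Finset.range (N + 1),
            (if (k+1)*j ≤ N then
              w (k+1) ^ j / (j.factorial : ℝ) * (V ^ θ * (V ^ (F - j) / ((F - j).factorial : ℝ)))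
              else 0) := Finset.sum_le_sum hanal
        _ ≤ V ^ θ * ((w (k+1) + V) ^ F / (F.factorial : ℝ)) := hsupp
        _ ≤ Wseq w (k+1) ^ ((N : ℝ) / ((k : ℕ) + 1 : ℝ)) / (F.factorial : ℝ) := hfinal
        _ = Wseq w (k+1) ^ ((N : ℝ) / ((k + 1 : ℕ) : ℝ)) / ((N / (k+1)).factorial : ℝ) := by
            rw [hF]
            norm_num

end Aux5

section Aux6
open Finset

lemma keyN_le_box {m n : ℕ} (ν : Fin m → ℕ)
    (hν : ν ∈ Fintype.piFinset (fun _ : Fin m => Finset.range (n + 1))) :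
    keyN m ν ≤ m * (m * n) := by
  rw [Fintype.mem_piFinset] at hν
  calc keyN m ν = ∑ i : Fin m, ((i : ℕ) + 1) * ν i := rfl
    _ ≤ ∑ _i : Fin m, m * n := by
        refine Finset.sum_le_sum fun i _ => ?_
        have h1 : (i : ℕ) + 1 ≤ m := i.2
        have h2 : ν i ≤ n := by have := hν i; rw [mem_range] at this; omega
        exact Nat.mul_le_mul h1 h2
    _ = m * (m * n) := by rw [Finset.sum_const, Finset.card_univ, Fintype.card_fin, smul_eq_mul]

lemma Bfun_le_sumT {m : ℕ} {qb : ℕ → ℝ} (hqb : ∀ i : Fin m, 0 ≤ qb ((i : ℕ) + 1))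
    (n kbar : ℕ) :
    Bfun m qb n ((kbar : ℤ) + 1) ≤
      ∑ N ∈ Finset.Icc (kbar + 1) (m * (m * n)), Tprof (fun i => (n : ℝ) * qb i) m N := by
  rw [Bfun, ← Finset.sum_filter]
  have hmaps : ∀ ν ∈ (Fintype.piFinset (fun _ : Fin m => Finset.range (n + 1))).filter
      (fun ν => (kbar : ℤ) + 1 ≤ (keyN m ν : ℤ)), keyN m ν ∈ Finset.Icc (kbar + 1) (m * (m * n)) := by
    intro ν hν
    rw [mem_filter] at hν
    rw [mem_Icc]
    constructor
    · exact_mod_cast hν.2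
    · exact keyN_le_box ν hν.1
  rw [← Finset.sum_fiberwise_of_maps_to hmaps (pw m (fun i => (n : ℝ) * qb i))]
  refine Finset.sum_le_sum fun N _ => ?_
  rw [Tprof]
  refine Finset.sum_le_sum_of_subset_of_nonneg ?_ (fun ν _ _ =>
    pw_nonneg (fun i => mul_nonneg (Nat.cast_nonneg n) (hqb i)) ν)
  intro ν hν
  rw [mem_filter, mem_filter, Fintype.mem_piFinset] at hν
  obtain ⟨⟨hbox, _⟩, hkey⟩ := hν
  rw [mem_filter, Fintype.mem_piFinset]
  refine ⟨fun i => ?_, hkey⟩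
  rw [mem_range]
  have := coord_le_keyN ν i
  omega

lemma pow_fact_le (W : ℝ) (hW : 0 ≤ W) (j : ℕ) :
    W ^ j / (j.factorial : ℝ) ≤ Real.exp (W * Real.exp 1) * Real.exp (-(j : ℝ)) := by
  have hx : 0 ≤ W * Real.exp 1 := by positivity
  have h1 : (W * Real.exp 1) ^ j / (j.factorial : ℝ) ≤ Real.exp (W * Real.exp 1) := by
    have hsum := Real.sum_le_exp_of_nonneg hx (j + 1)
    have hterm : (W * Real.exp 1) ^ j / (j.factorial : ℝ) ≤
        ∑ i ∈ Finset.range (j + 1), (W * Real.exp 1) ^ i / (i.factorial : ℝ) :=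
      Finset.single_le_sum (f := fun i => (W * Real.exp 1) ^ i / (i.factorial : ℝ))
        (fun i _ => by positivity) (Finset.self_mem_range_succ j)
    linarith
  have he : (Real.exp 1) ^ j = Real.exp (j : ℝ) := by
    rw [← Real.exp_nat_mul, mul_one]
  have h2 : W ^ j / (j.factorial : ℝ) =
      (W * Real.exp 1) ^ j / (j.factorial : ℝ) * Real.exp (-(j : ℝ)) := by
    rw [mul_pow, he, Real.exp_neg]
    have hne : Real.exp (j : ℝ) ≠ 0 := (Real.exp_pos _).ne'
    field_simp
  rw [h2]
  exact mul_le_mul_of_nonneg_right h1 (Real.exp_pos _).le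

lemma term_tail {W : ℝ} (hW : 0 < W) {m : ℕ} (hm : 1 ≤ m) (N : ℕ) :
    W ^ ((N : ℝ) / (m : ℝ)) / ((N / m).factorial : ℝ) ≤
      max W 1 * Real.exp (W * Real.exp 1) * Real.exp 1 * Real.exp (-((N : ℝ) / (m : ℝ))) := by
  set j : ℕ := N / m with hj
  have hm0 : (0 : ℝ) < (m : ℝ) := by exact_mod_cast hm
  have hNj : (N : ℝ) / (m : ℝ) < (j : ℝ) + 1 := by
    have hnat : N < (N / m + 1) * m := by
      have h1 := Nat.div_add_mod N m
      have h2 := Nat.mod_lt N (show 0 < m by omega)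
      nlinarith [Nat.div_mul_le_self N m]
    rw [div_lt_iff₀ hm0]
    calc (N : ℝ) < (((N / m + 1) * m : ℕ) : ℝ) := Nat.cast_lt.2 hnat
      _ = ((j : ℝ) + 1) * (m : ℝ) := by rw [hj]; push_cast; ring
  have hjN : (j : ℝ) ≤ (N : ℝ) / (m : ℝ) := by
    rw [le_div_iff₀ hm0]
    calc (j : ℝ) * (m : ℝ) = ((j * m : ℕ) : ℝ) := by push_cast; ring
      _ ≤ (N : ℝ) := by exact_mod_cast Nat.div_mul_le_self N m
  have h1 : W ^ ((N : ℝ) / (m : ℝ)) ≤ max W 1 * W ^ j := by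
    rcases le_or_gt 1 W with hW1 | hW1
    · calc W ^ ((N : ℝ) / (m : ℝ)) ≤ W ^ ((j : ℝ) + 1) :=
          Real.rpow_le_rpow_of_exponent_le hW1 hNj.le
        _ = W ^ (j + 1) := by
            rw [show ((j : ℝ) + 1) = ((j + 1 : ℕ) : ℝ) by push_cast; ring, Real.rpow_natCast]
        _ = W * W ^ j := by rw [pow_succ]; ring
        _ ≤ max W 1 * W ^ j :=
            mul_le_mul_of_nonneg_right (le_max_left W 1) (pow_nonneg hW.le j)
    · calc W ^ ((N : ℝ) / (m : ℝ)) ≤ W ^ ((j : ℕ) : ℝ) :=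
          Real.rpow_le_rpow_of_exponent_ge hW hW1.le hjN
        _ = W ^ j := Real.rpow_natCast W j
        _ = 1 * W ^ j := (one_mul _).symm
        _ ≤ max W 1 * W ^ j :=
            mul_le_mul_of_nonneg_right (le_max_right W 1) (pow_nonneg hW.le j)
  have hfac : (0 : ℝ) < ((j.factorial : ℕ) : ℝ) := by exact_mod_cast Nat.factorial_pos j
  have h2 : W ^ j / (j.factorial : ℝ) ≤ Real.exp (W * Real.exp 1) * Real.exp (-(j : ℝ)) :=
    pow_fact_le W hW.le j
  have h3 : Real.exp (-(j : ℝ)) ≤ Real.exp 1 * Real.exp (-((N : ℝ) / (m : ℝ))) := by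
    rw [← Real.exp_add]
    apply Real.exp_le_exp.2
    linarith
  calc W ^ ((N : ℝ) / (m : ℝ)) / ((N / m).factorial : ℝ)
      ≤ (max W 1 * W ^ j) / (j.factorial : ℝ) := (div_le_div_iff_of_pos_right hfac).2 h1
    _ = max W 1 * (W ^ j / (j.factorial : ℝ)) := by ring
    _ ≤ max W 1 * (Real.exp (W * Real.exp 1) * Real.exp (-(j : ℝ))) :=
        mul_le_mul_of_nonneg_left h2 (le_trans zero_le_one (le_max_right W 1))
    _ ≤ max W 1 * (Real.exp (W * Real.exp 1) * (Real.exp 1 * Real.exp (-((N : ℝ) / (m : ℝ))))) := by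
        apply mul_le_mul_of_nonneg_left _ (le_trans zero_le_one (le_max_right W 1))
        exact mul_le_mul_of_nonneg_left h3 (Real.exp_pos _).le
    _ = max W 1 * Real.exp (W * Real.exp 1) * Real.exp 1 * Real.exp (-((N : ℝ) / (m : ℝ))) := by
        ring

lemma tail_sum {m : ℕ} (hm : 1 ≤ m) (a b : ℕ) :
    ∑ N ∈ Finset.Icc a b, Real.exp (-((N : ℝ) / (m : ℝ))) ≤
      2 * (m : ℝ) * Real.exp (-((a : ℝ) / (m : ℝ))) := by
  have hm0 : (0 : ℝ) < (m : ℝ) := by exact_mod_cast hm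
  set ρ : ℝ := Real.exp (-(1 / (m : ℝ))) with hρ
  have hρ0 : 0 ≤ ρ := (Real.exp_pos _).le
  have hρ1 : ρ < 1 := by
    have hneg : -(1 / (m : ℝ)) < 0 := by
      have : 0 < 1 / (m : ℝ) := by positivity
      linarith
    have h := Real.exp_lt_exp.2 hneg
    rw [Real.exp_zero] at h
    exact hρ ▸ h
  have hterm : ∀ N : ℕ, Real.exp (-((N : ℝ) / (m : ℝ))) = ρ ^ N := by
    intro N
    rw [hρ, ← Real.exp_nat_mul]
    congr 1
    field_simp
  have hgap : 1 / (2 * (m : ℝ)) ≤ 1 - ρ := by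
    have he : 1 / (m : ℝ) + 1 ≤ Real.exp (1 / (m : ℝ)) := Real.add_one_le_exp _
    have hρle : ρ ≤ 1 / (1 + 1 / (m : ℝ)) := by
      rw [hρ, Real.exp_neg, ← one_div]
      apply one_div_le_one_div_of_le (by positivity) (by linarith)
    have hm1 : (1 : ℝ) ≤ (m : ℝ) := by exact_mod_cast hm
    have key : 1 / (1 + 1 / (m : ℝ)) ≤ 1 - 1 / (2 * (m : ℝ)) := by
      rw [div_le_iff₀ (by positivity)]
      have h2 : 1 / (m : ℝ) * (m : ℝ) = 1 := by field_simp
      have h3 : 0 < 1 / (m : ℝ) := by positivity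
      have h4 : 1 / (m : ℝ) ≤ 1 := by rw [div_le_one hm0]; exact hm1
      have h5 : 1 / (2 * (m : ℝ)) * (m : ℝ) = 1 / 2 := by field_simp
      nlinarith [mul_pos h3 (show (0:ℝ) < 1 / (2 * (m:ℝ)) by positivity)]
    linarith
  calc ∑ N ∈ Finset.Icc a b, Real.exp (-((N : ℝ) / (m : ℝ)))
      = ∑ N ∈ Finset.Ico a (b + 1), ρ ^ N := by
        rw [Finset.Ico_add_one_right_eq_Icc]
        exact Finset.sum_congr rfl fun N _ => hterm N
    _ ≤ ρ ^ a / (1 - ρ) := geom_sum_Ico_le_of_lt_one hρ0 hρ1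
    _ ≤ ρ ^ a / (1 / (2 * (m : ℝ))) := by
        apply div_le_div_of_nonneg_left (pow_nonneg hρ0 a) (by positivity) hgap
    _ = 2 * (m : ℝ) * ρ ^ a := by
        rw [div_div_eq_mul_div, div_one]
        ring
    _ = 2 * (m : ℝ) * Real.exp (-((a : ℝ) / (m : ℝ))) := by rw [hterm a]

lemma Mseq_ge_one (w : ℕ → ℝ) {i : ℕ} (hi : 1 ≤ i) (hW : 0 < Wseq w i) :
    1 ≤ Mseq w i := by
  rcases le_or_gt 1 (Wseq w i) with h | h
  · exact le_trans h (le_max_left _ _)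
  · refine le_trans ?_ (le_max_right _ _)
    apply Real.one_le_rpow_of_pos_of_le_one_of_nonpos hW h.le
    apply div_nonpos_of_nonpos_of_nonneg
    · have : (1 : ℝ) ≤ (i : ℝ) := by exact_mod_cast hi
      linarith
    · positivity

end Aux6







set_option maxHeartbeats 1000000 in
/-- Theorem: assume `r ≥ 0` and `max(q₁, q₋₁) > 0`; if `k̄ = l̄` satisfies
`k̄ ≥ max{ m⌈2W_m − 1⌉ − 1, m⌈W_m e − ln ε + ln(4m(m+1)KG)⌉ − 1 }`, then the truncated
backward American put price with boundary value `K` satisfies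
`|V_A^K(0,0,0) − V_A(0,0,0)| < ε`. -/
theorem american_truncation_error (n m : ℕ) (hn : 1 ≤ n) (hm : 1 ≤ m) (q : ℤ → ℝ)
    (hq : ∀ l : ℤ, -(m : ℤ) ≤ l → l ≤ (m : ℤ) → 0 ≤ q l)
    (hsum : ∑ l ∈ Finset.Icc (-(m : ℤ)) (m : ℤ), q l = 1)
    (hq1 : 0 < max (q 1) (q (-1)))
    (wf : ℕ → ℝ) (hwf : ∀ i : ℕ, wf i = (n : ℝ) * max (q (i : ℤ)) (q (-(i : ℤ))))
    (S0 K σ τ h r p : ℝ) (hS0 : 0 < S0) (hK : 0 < K) (hh : 0 < h) (hτ : 0 < τ)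
    (hr : 0 ≤ r) (hp0 : 0 ≤ p) (hp1 : p ≤ 1)
    (ε : ℝ) (hε : 0 < ε) (kbar : ℕ)
    (hkbar : max ((m : ℝ) * (⌈2 * Wseq wf m - 1⌉ : ℤ) - 1)
        ((m : ℝ) * (⌈Wseq wf m * Real.exp 1 - Real.log ε +
            Real.log (4 * m * ((m : ℝ) + 1) * K * Gconst wf m)⌉ : ℤ) - 1) ≤ (kbar : ℝ)) :
    |VAtr n m q p (τ / n) S0 K σ h r K kbar kbar n 0 0 -
        VAfull n m q p (τ / n) S0 K σ h r n 0 0| < ε := by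
  classical
  have hn0 : (0:ℝ) < (n:ℝ) := by exact_mod_cast hn
  have hm0 : (0:ℝ) < (m:ℝ) := by exact_mod_cast hm
  have hdt : 0 < τ / n := div_pos hτ hn0
  have hrdt : 0 ≤ r * (τ / n) := mul_nonneg hr hdt.le
  have hq' : ∀ k ∈ Finset.Icc (-(m:ℤ)) (m:ℤ), 0 ≤ q k := by
    intro k hk; rw [Finset.mem_Icc] at hk; exact hq k hk.1 hk.2
  set qb : ℕ → ℝ := fun i => max (q (i:ℤ)) (q (-(i:ℤ))) with hqbdef
  have hqb_eval : ∀ j : ℕ, qb j = max (q (j:ℤ)) (q (-(j:ℤ))) := fun j => rfl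
  have hqb : ∀ i : Fin m, 0 ≤ qb ((i:ℕ)+1) := by
    intro i
    have hi := i.2
    rw [hqb_eval]
    refine le_trans (hq (((i:ℕ)+1 : ℕ) : ℤ) ?_ ?_) (le_max_left _ _)
    · push_cast; omega
    · push_cast; omega
  have hwfeq : (fun i => (n : ℝ) * qb i) = wf := by
    funext i
    rw [hqb_eval, hwf i]
  have hwf1 : 0 < wf 1 := by
    rw [hwf 1]
    push_cast
    exact mul_pos hn0 hq1
  have hwfnn : ∀ i, 1 ≤ i → i ≤ m → 0 ≤ wf i := by
    intro i h1 h2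
    rw [hwf i]
    have ha := hq (i:ℤ) (by omega) (by exact_mod_cast h2)
    exact mul_nonneg hn0.le (le_trans ha (le_max_left _ _))
  have hW : 0 < Wseq wf m :=
    Wseq_pos wf hwf1 m hm (fun i h2 him => hwfnn i (by omega) him)
  have hmaxW1 : (0:ℝ) < max (Wseq wf m) 1 := lt_of_lt_of_le one_pos (le_max_right _ _)
  have hP1 : (1:ℝ) ≤ ∏ i ∈ Finset.Icc 1 (m-1), (Mseq wf i)^2 := by
    rw [show (1:ℝ) = ∏ _i ∈ Finset.Icc 1 (m-1), (1:ℝ) from (Finset.prod_const_one).symm]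
    apply Finset.prod_le_prod (fun _ _ => zero_le_one)
    intro i hi
    rw [Finset.mem_Icc] at hi
    have hWi : 0 < Wseq wf i :=
      Wseq_pos wf hwf1 i hi.1 (fun j h2 hji => hwfnn j (by omega) (by omega))
    have hM := Mseq_ge_one wf hi.1 hWi
    nlinarith
  have hPpos : (0:ℝ) < ∏ i ∈ Finset.Icc 1 (m-1), (Mseq wf i)^2 := lt_of_lt_of_le one_pos hP1
  have hG : 0 < Gconst wf m := by
    rw [Gconst]
    have h2m : (0:ℝ) < 2 * (m:ℝ) := by positivity
    exact mul_pos (mul_pos (mul_pos h2m hmaxW1) (Real.exp_pos _)) hPpos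
  have hC : (0:ℝ) < 4 * m * ((m : ℝ) + 1) * K * Gconst wf m := by
    have h1 : (0:ℝ) < 4 * m * ((m : ℝ) + 1) * K := by positivity
    exact mul_pos h1 hG
  -- sandwich
  have hs := sandwich (n := n) (σ := σ) (h := h) hq hsum hS0 hK hp0 hp1 hrdt kbar n 0 0
  rw [abs_of_nonneg (sub_nonneg.2 hs.1)]
  -- Eex bounded by one-sided exits
  have hE := Eex_le_Ufun (m := m) hq' hsum kbar n 0
  rw [sub_zero, add_zero] at hE
  -- Ufun bounded by profile sums
  have hρq1 : ∀ i : Fin m, q (((i:ℕ):ℤ)+1) ≤ qb ((i:ℕ)+1) := by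
    intro i
    rw [hqb_eval]
    have hcast : (((i:ℕ)+1 : ℕ):ℤ) = ((i:ℕ):ℤ)+1 := by push_cast; ring
    rw [hcast]
    exact le_max_left _ _
  have hρq2 : ∀ i : Fin m, (fun k => q (-k)) (((i:ℕ):ℤ)+1) ≤ qb ((i:ℕ)+1) := by
    intro i
    rw [hqb_eval]
    have hcast : (((i:ℕ)+1 : ℕ):ℤ) = ((i:ℕ):ℤ)+1 := by push_cast; ring
    rw [hcast]
    exact le_max_right _ _
  have hqneg : ∀ k ∈ Finset.Icc (-(m:ℤ)) (m:ℤ), 0 ≤ (fun k => q (-k)) k := by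
    intro k hk; rw [Finset.mem_Icc] at hk; exact hq (-k) (by omega) (by omega)
  have hsumneg : ∑ k ∈ Finset.Icc (-(m:ℤ)) (m:ℤ), (fun k => q (-k)) k = 1 := by
    rw [← hsum]
    exact Finset.sum_nbij' (fun k => -k) (fun k => -k)
      (by intro a ha; rw [Finset.mem_Icc] at *; omega)
      (by intro a ha; rw [Finset.mem_Icc] at *; omega)
      (by intros; omega) (by intros; omega) (fun a _ => rfl)
  have hU1 := Ufun_le_Bfun hm hqb hq' hsum hρq1 n ((kbar:ℤ)+1)
  have hU2 := Ufun_le_Bfun hm hqb hqneg hsumneg hρq2 n ((kbar:ℤ)+1)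
  have hB := Bfun_le_sumT hqb n kbar
  rw [hwfeq] at hB
  -- tail estimate
  have hsumT : ∑ N ∈ Finset.Icc (kbar+1) (m*(m*n)), Tprof wf m N ≤
      max (Wseq wf m) 1 * Real.exp (Wseq wf m * Real.exp 1) * Real.exp 1 *
        (2*(m:ℝ)*Real.exp (-(((kbar+1 : ℕ) : ℝ) / (m:ℝ)))) := by
    calc ∑ N ∈ Finset.Icc (kbar+1) (m*(m*n)), Tprof wf m N
        ≤ ∑ N ∈ Finset.Icc (kbar+1) (m*(m*n)),
          max (Wseq wf m) 1 * Real.exp (Wseq wf m * Real.exp 1) * Real.exp 1 *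
            Real.exp (-((N : ℝ) / (m : ℝ))) := by
          refine Finset.sum_le_sum fun N _ => ?_
          exact le_trans (Tprof_le wf hwf1 m hm hwfnn N) (term_tail hW hm N)
      _ = max (Wseq wf m) 1 * Real.exp (Wseq wf m * Real.exp 1) * Real.exp 1 *
          ∑ N ∈ Finset.Icc (kbar+1) (m*(m*n)), Real.exp (-((N : ℝ) / (m : ℝ))) := by
          rw [← Finset.mul_sum]
      _ ≤ _ := by
          apply mul_le_mul_of_nonneg_left (tail_sum hm (kbar+1) (m*(m*n)))
          positivity
  -- assemble the main bound
  have hmain : VAtr n m q p (τ / n) S0 K σ h r K kbar kbar n 0 0 -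
      VAfull n m q p (τ / n) S0 K σ h r n 0 0 ≤
      K * (2 * (max (Wseq wf m) 1 * Real.exp (Wseq wf m * Real.exp 1) * Real.exp 1 *
        (2*(m:ℝ)*Real.exp (-(((kbar+1 : ℕ) : ℝ) / (m:ℝ)))))) := by
    have e2 : Eex m q kbar n 0 ≤ 2 * Bfun m qb n ((kbar:ℤ)+1) := by linarith
    have e3 : Eex m q kbar n 0 ≤ 2 * (max (Wseq wf m) 1 * Real.exp (Wseq wf m * Real.exp 1) *
        Real.exp 1 * (2*(m:ℝ)*Real.exp (-(((kbar+1 : ℕ) : ℝ) / (m:ℝ))))) := by linarith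
    calc VAtr n m q p (τ / n) S0 K σ h r K kbar kbar n 0 0 -
        VAfull n m q p (τ / n) S0 K σ h r n 0 0 ≤ K * Eex m q kbar n 0 := hs.2
      _ ≤ K * (2 * (max (Wseq wf m) 1 * Real.exp (Wseq wf m * Real.exp 1) * Real.exp 1 *
          (2*(m:ℝ)*Real.exp (-(((kbar+1 : ℕ) : ℝ) / (m:ℝ)))))) :=
          mul_le_mul_of_nonneg_left e3 hK.le
  -- exploit the hypothesis on kbar
  have hk2 : (m : ℝ) * (⌈Wseq wf m * Real.exp 1 - Real.log ε +
      Real.log (4 * m * ((m : ℝ) + 1) * K * Gconst wf m)⌉ : ℤ) - 1 ≤ (kbar : ℝ) :=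
    le_trans (le_max_right _ _) hkbar
  have hxle : Wseq wf m * Real.exp 1 - Real.log ε +
      Real.log (4 * m * ((m : ℝ) + 1) * K * Gconst wf m) ≤ ((kbar+1 : ℕ) : ℝ) / (m:ℝ) := by
    have h1 := Int.le_ceil (Wseq wf m * Real.exp 1 - Real.log ε +
      Real.log (4 * m * ((m : ℝ) + 1) * K * Gconst wf m))
    rw [le_div_iff₀ hm0]
    push_cast
    nlinarith
  have hE1le : Real.exp (-(((kbar+1 : ℕ) : ℝ) / (m:ℝ))) ≤
      ε * Real.exp (-(Wseq wf m * Real.exp 1)) / (4 * m * ((m : ℝ) + 1) * K * Gconst wf m) := by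
    have h2 : Real.exp (-(((kbar+1 : ℕ) : ℝ) / (m:ℝ))) ≤
        Real.exp (-(Wseq wf m * Real.exp 1 - Real.log ε +
          Real.log (4 * m * ((m : ℝ) + 1) * K * Gconst wf m))) :=
      Real.exp_le_exp.2 (by linarith)
    have h3 : Real.exp (-(Wseq wf m * Real.exp 1 - Real.log ε +
        Real.log (4 * m * ((m : ℝ) + 1) * K * Gconst wf m))) =
        ε * Real.exp (-(Wseq wf m * Real.exp 1)) / (4 * m * ((m : ℝ) + 1) * K * Gconst wf m) := by
      rw [show -(Wseq wf m * Real.exp 1 - Real.log ε +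
          Real.log (4 * m * ((m : ℝ) + 1) * K * Gconst wf m)) =
          -(Wseq wf m * Real.exp 1) + (Real.log ε +
            -(Real.log (4 * m * ((m : ℝ) + 1) * K * Gconst wf m))) by ring]
      rw [Real.exp_add, Real.exp_add, Real.exp_log hε,
        Real.exp_neg (Real.log (4 * m * ((m : ℝ) + 1) * K * Gconst wf m)), Real.exp_log hC]
      ring
    rw [h3] at h2
    exact h2
  -- final numeric computation
  have hA : (0:ℝ) < 4*K*(m:ℝ)*max (Wseq wf m) 1*Real.exp 1 := by positivity
  have hAC : 4*K*(m:ℝ)*max (Wseq wf m) 1*Real.exp 1 <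
      4 * m * ((m : ℝ) + 1) * K * Gconst wf m := by
    have hCeq : 4 * m * ((m : ℝ) + 1) * K * Gconst wf m =
        (4*K*(m:ℝ)*max (Wseq wf m) 1) * (2*(m:ℝ)*((m:ℝ)+1)*Real.exp (Wseq wf m) *
          ∏ i ∈ Finset.Icc 1 (m-1), (Mseq wf i)^2) := by
      rw [Gconst]; ring
    have hm1 : (1:ℝ) ≤ (m:ℝ) := by exact_mod_cast hm
    have h5 : (1:ℝ) ≤ Real.exp (Wseq wf m) := by
      linarith [Real.add_one_le_exp (Wseq wf m), hW]
    have h7 : (4:ℝ) ≤ 2*(m:ℝ)*((m:ℝ)+1)*Real.exp (Wseq wf m) *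
        ∏ i ∈ Finset.Icc 1 (m-1), (Mseq wf i)^2 := by
      have h4 : (4:ℝ) ≤ 2*(m:ℝ)*((m:ℝ)+1) := by nlinarith
      have h6 : (1:ℝ) ≤ Real.exp (Wseq wf m) * ∏ i ∈ Finset.Icc 1 (m-1), (Mseq wf i)^2 := by
        nlinarith
      nlinarith [mul_le_mul h4 h6 zero_le_one (by positivity : (0:ℝ) ≤ 2*(m:ℝ)*((m:ℝ)+1))]
    have h8 : Real.exp 1 < 3 := lt_trans Real.exp_one_lt_d9 (by norm_num)
    have hBpos : (0:ℝ) < 4*K*(m:ℝ)*max (Wseq wf m) 1 := by positivity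
    calc 4*K*(m:ℝ)*max (Wseq wf m) 1*Real.exp 1
        < (4*K*(m:ℝ)*max (Wseq wf m) 1) * (2*(m:ℝ)*((m:ℝ)+1)*Real.exp (Wseq wf m) *
          ∏ i ∈ Finset.Icc 1 (m-1), (Mseq wf i)^2) := by
          apply mul_lt_mul_of_pos_left _ hBpos
          linarith
      _ = 4 * m * ((m : ℝ) + 1) * K * Gconst wf m := hCeq.symm
  have hXeq : K * (2 * (max (Wseq wf m) 1 * Real.exp (Wseq wf m * Real.exp 1) * Real.exp 1 *
      (2*(m:ℝ)*Real.exp (-(((kbar+1 : ℕ) : ℝ) / (m:ℝ)))))) =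
      (4*K*(m:ℝ)*max (Wseq wf m) 1*Real.exp 1) *
        (Real.exp (Wseq wf m * Real.exp 1) * Real.exp (-(((kbar+1 : ℕ) : ℝ) / (m:ℝ)))) := by
    ring
  have hprod : Real.exp (Wseq wf m * Real.exp 1) * Real.exp (-(((kbar+1 : ℕ) : ℝ) / (m:ℝ))) ≤
      ε / (4 * m * ((m : ℝ) + 1) * K * Gconst wf m) := by
    calc Real.exp (Wseq wf m * Real.exp 1) * Real.exp (-(((kbar+1 : ℕ) : ℝ) / (m:ℝ)))
        ≤ Real.exp (Wseq wf m * Real.exp 1) *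
          (ε * Real.exp (-(Wseq wf m * Real.exp 1)) / (4 * m * ((m : ℝ) + 1) * K * Gconst wf m)) :=
          mul_le_mul_of_nonneg_left hE1le (Real.exp_pos _).le
      _ = (Real.exp (Wseq wf m * Real.exp 1) * Real.exp (-(Wseq wf m * Real.exp 1))) * ε /
          (4 * m * ((m : ℝ) + 1) * K * Gconst wf m) := by ring
      _ = ε / (4 * m * ((m : ℝ) + 1) * K * Gconst wf m) := by
          rw [← Real.exp_add]
          simp
  have hfin : (4*K*(m:ℝ)*max (Wseq wf m) 1*Real.exp 1) *
      (ε / (4 * m * ((m : ℝ) + 1) * K * Gconst wf m)) < ε := by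
    have hdivlt : (4*K*(m:ℝ)*max (Wseq wf m) 1*Real.exp 1) /
        (4 * m * ((m : ℝ) + 1) * K * Gconst wf m) < 1 := by
      rw [div_lt_one hC]
      exact hAC
    calc (4*K*(m:ℝ)*max (Wseq wf m) 1*Real.exp 1) *
        (ε / (4 * m * ((m : ℝ) + 1) * K * Gconst wf m))
        = ε * ((4*K*(m:ℝ)*max (Wseq wf m) 1*Real.exp 1) /
          (4 * m * ((m : ℝ) + 1) * K * Gconst wf m)) := by ring
      _ < ε * 1 := by exact mul_lt_mul_of_pos_left hdivlt hε
      _ = ε := mul_one ε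
  calc VAtr n m q p (τ / n) S0 K σ h r K kbar kbar n 0 0 -
      VAfull n m q p (τ / n) S0 K σ h r n 0 0
      ≤ K * (2 * (max (Wseq wf m) 1 * Real.exp (Wseq wf m * Real.exp 1) * Real.exp 1 *
        (2*(m:ℝ)*Real.exp (-(((kbar+1 : ℕ) : ℝ) / (m:ℝ)))))) := hmain
    _ = (4*K*(m:ℝ)*max (Wseq wf m) 1*Real.exp 1) *
        (Real.exp (Wseq wf m * Real.exp 1) * Real.exp (-(((kbar+1 : ℕ) : ℝ) / (m:ℝ)))) := hXeq
    _ ≤ (4*K*(m:ℝ)*max (Wseq wf m) 1*Real.exp 1) *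
        (ε / (4 * m * ((m : ℝ) + 1) * K * Gconst wf m)) :=
        mul_le_mul_of_nonneg_left hprod hA.le
    _ < ε := hfin
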